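/- arXiv:1210.0112 — 6 statements merged into one kernel-verified Lean document; each statement's English description precedes it below -/
import Mathlib

section
/- Let f, g : [0,1] → [0,1] be continuous maps with f(0)=0, g(1)=1, 0<f(x)<x for x≠0, x<g(x)<1 for x≠1, and f, g orientation-preserving homeomorphisms onto their images. Let ⟨f,g⟩₊ be the semigroup of all finite compositions of f and g, and for x ∈ I let O₊(x) = {φ(x) : φ ∈ ⟨f,g⟩₊}. Then for every x ∈ I, the closure of O₊(0) is contained in the closure of O₊(x). -/
def unitI : Set ℝ := Set.Icc 0 1

def memC (f g : ℝ → ℝ) : Prop :=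
  ContinuousOn f unitI ∧ ContinuousOn g unitI ∧
  Set.MapsTo f unitI unitI ∧ Set.MapsTo g unitI unitI ∧
  f 0 = 0 ∧ g 1 = 1 ∧
  (∀ x ∈ unitI, x ≠ 0 → 0 < f x ∧ f x < x) ∧
  (∀ x ∈ unitI, x ≠ 1 → x < g x ∧ g x < 1) ∧
  StrictMonoOn f unitI ∧ StrictMonoOn g unitI

def orbit (f g : ℝ → ℝ) (x : ℝ) : Set ℝ :=
  { y | ∃ w : List (ℝ → ℝ), w ≠ [] ∧ (∀ h ∈ w, h = f ∨ h = g) ∧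
        y = w.foldl (fun a h => h a) x }

lemma foldl_replicate (f : ℝ → ℝ) (x : ℝ) :
    ∀ n, (List.replicate n f).foldl (fun a h => h a) x = f^[n] x := by
  intro n
  induction n generalizing x with
  | zero => simp
  | succ n ih =>
    rw [List.replicate_succ, List.foldl_cons, ih, Function.iterate_succ_apply]

theorem closure_orbit_zero_subset (f g : ℝ → ℝ) (h : memC f g) :
    ∀ x ∈ unitI, closure (orbit f g 0) ⊆ closure (orbit f g x) := by
  obtain ⟨hfc, hgc, hfm, hgm, hf0, hg1, hfx, hgx, hfs, hgs⟩ := h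
  intro x hx
  -- key facts about f
  have hfle : ∀ y ∈ unitI, f y ≤ y := by
    intro y hy
    by_cases h0 : y = 0
    · simp [h0, hf0]
    · exact (hfx y hy h0).2.le
  have hfnn : ∀ y ∈ unitI, 0 ≤ f y := by
    intro y hy
    by_cases h0 : y = 0
    · simp [h0, hf0]
    · exact (hfx y hy h0).1.le
  set a : ℕ → ℝ := fun n => f^[n] x with ha
  have haI : ∀ n, a n ∈ unitI := by
    intro n
    induction n with
    | zero => simpa [ha] using hx
    | succ n ih =>
      have : a (n+1) = f (a n) := by simp [ha, Function.iterate_succ_apply']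
      rw [this]; exact hfm ih
  have hanti : Antitone a := by
    apply antitone_nat_of_succ_le
    intro n
    have : a (n+1) = f (a n) := by simp [ha, Function.iterate_succ_apply']
    rw [this]; exact hfle _ (haI n)
  have hbdd : BddBelow (Set.range a) := by
    refine ⟨0, ?_⟩
    rintro _ ⟨n, rfl⟩
    exact (haI n).1
  -- limit
  have htend : Filter.Tendsto a Filter.atTop (nhds (⨅ n, a n)) :=
    tendsto_atTop_ciInf hanti hbdd
  set L := ⨅ n, a n with hL
  have hLI : L ∈ unitI := by
    constructor
    · exact le_ciInf fun n => (haI n).1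
    · exact le_trans (ciInf_le hbdd 0) (haI 0).2
  have htendw : Filter.Tendsto a Filter.atTop (nhdsWithin L unitI) :=
    tendsto_nhdsWithin_of_tendsto_nhds_of_eventually_within _ htend
      (Filter.Eventually.of_forall haI)
  have hfL : f L = L := by
    have h1 : Filter.Tendsto (fun n => f (a n)) Filter.atTop (nhds (f L)) :=
      (hfc L hLI).tendsto.comp htendw
    have h2 : Filter.Tendsto (fun n => f (a n)) Filter.atTop (nhds L) := by
      have : (fun n => f (a n)) = fun n => a (n+1) := by
        funext n; simp [ha, Function.iterate_succ_apply']
      rw [this]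
      exact htend.comp (Filter.tendsto_add_atTop_nat 1)
    exact tendsto_nhds_unique h1 h2
  have hL0 : L = 0 := by
    by_contra h0
    exact absurd hfL (ne_of_lt (hfx L hLI h0).2)
  rw [hL0] at htend
  -- continuity and mapsTo of words
  have hword : ∀ w : List (ℝ → ℝ), (∀ h ∈ w, h = f ∨ h = g) →
      ContinuousOn (fun t => w.foldl (fun a h => h a) t) unitI ∧
      Set.MapsTo (fun t => w.foldl (fun a h => h a) t) unitI unitI := by
    intro w
    induction w with
    | nil => intro _; exact ⟨continuousOn_id, Set.mapsTo_id _⟩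
    | cons hd tl ih =>
      intro hw
      have hhd : hd = f ∨ hd = g := hw hd List.mem_cons_self
      have htl := ih fun h hm => hw h (List.mem_cons_of_mem _ hm)
      have hhdc : ContinuousOn hd unitI := by rcases hhd with rfl | rfl <;> assumption
      have hhdm : Set.MapsTo hd unitI unitI := by rcases hhd with rfl | rfl <;> assumption
      constructor
      · exact htl.1.comp hhdc hhdm
      · exact htl.2.comp hhdm
  -- main argument
  apply closure_minimal _ isClosed_closure
  rintro y ⟨w, hwne, hwfg, rfl⟩
  have h0I : (0:ℝ) ∈ unitI := by constructor <;> norm_num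
  obtain ⟨hc, hm⟩ := hword w hwfg
  have htendw0 : Filter.Tendsto a Filter.atTop (nhdsWithin 0 unitI) :=
    tendsto_nhdsWithin_of_tendsto_nhds_of_eventually_within _ htend
      (Filter.Eventually.of_forall haI)
  have hT : Filter.Tendsto (fun n => w.foldl (fun a h => h a) (a n)) Filter.atTop
      (nhds (w.foldl (fun a h => h a) 0)) :=
    (hc 0 h0I).tendsto.comp htendw0
  refine mem_closure_of_tendsto (hT.comp (Filter.tendsto_add_atTop_nat 1)) ?_
  filter_upwards with n
  refine ⟨List.replicate (n+1) f ++ w, by simp, ?_, ?_⟩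
  · intro h hm
    rcases List.mem_append.1 hm with h1 | h2
    · left; exact List.eq_of_mem_replicate h1
    · exact hwfg h h2
  · rw [List.foldl_append, foldl_replicate]
    rfl
end

section
/- Let (f,g) ∈ 𝒞. Then there is a unique minimal set for the semigroup action of ⟨f,g⟩₊ on [0,1], and it equals the closure of O₊(0), and also equals the closure of O₊(1). -/
def IsMinimalSet (f g : ℝ → ℝ) (M : Set ℝ) : Prop :=
  M.Nonempty ∧ M ⊆ unitI ∧ ∀ x ∈ M, closure (orbit f g x) = M

namespace UMSAux

lemma word_cont {f g : ℝ → ℝ} (h : memC f g) :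
    ∀ w : List (ℝ → ℝ), (∀ u ∈ w, u = f ∨ u = g) →
      ContinuousOn (fun x => w.foldl (fun a h => h a) x) unitI ∧
      Set.MapsTo (fun x => w.foldl (fun a h => h a) x) unitI unitI := by
  intro w
  induction w with
  | nil => exact fun _ => ⟨continuousOn_id, fun x hx => hx⟩
  | cons u t ih =>
    intro hw
    have hu := hw u List.mem_cons_self
    have ht := ih (fun v hv => hw v (List.mem_cons_of_mem _ hv))
    have hcu : ContinuousOn u unitI := by
      rcases hu with h1 | h1 <;> subst h1
      exacts [h.1, h.2.1]
    have hmu : Set.MapsTo u unitI unitI := by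
      rcases hu with h1 | h1 <;> subst h1
      exacts [h.2.2.1, h.2.2.2.1]
    simp only [List.foldl_cons]
    exact ⟨ht.1.comp hcu hmu, ht.2.comp hmu⟩

lemma orbit_subset {f g : ℝ → ℝ} (h : memC f g) {x : ℝ} (hx : x ∈ unitI) :
    orbit f g x ⊆ unitI := by
  rintro y ⟨w, -, hw, rfl⟩
  exact (word_cont h w hw).2 hx

lemma orbit_mul {f g : ℝ → ℝ} {x z : ℝ} (hz : z ∈ orbit f g x)
    (w : List (ℝ → ℝ)) (hw : ∀ u ∈ w, u = f ∨ u = g) :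
    w.foldl (fun a h => h a) z ∈ orbit f g x := by
  obtain ⟨u, hune, hu, rfl⟩ := hz
  refine ⟨u ++ w, by simp [hune], ?_, ?_⟩
  · intro v hv
    rcases List.mem_append.mp hv with h1 | h1
    exacts [hu v h1, hw v h1]
  · rw [List.foldl_append]

lemma closure_invariant {f g : ℝ → ℝ} (h : memC f g) {x y : ℝ} (hx : x ∈ unitI)
    (hy : y ∈ closure (orbit f g x)) :
    orbit f g y ⊆ closure (orbit f g x) := by
  rintro z ⟨w, -, hw, rfl⟩
  have hS : orbit f g x ⊆ unitI := orbit_subset h hx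
  have hcS : closure (orbit f g x) ⊆ unitI := closure_minimal hS isClosed_Icc
  have hcont : ContinuousOn (fun t => w.foldl (fun a h => h a) t)
      (closure (orbit f g x)) := (word_cont h w hw).1.mono hcS
  have himg : (fun t => w.foldl (fun a h => h a) t) '' (orbit f g x) ⊆ orbit f g x := by
    rintro z ⟨p, hp, rfl⟩
    exact orbit_mul hp w hw
  have step1 : w.foldl (fun a h => h a) y ∈
      (fun t => w.foldl (fun a h => h a) t) '' closure (orbit f g x) :=
    Set.mem_image_of_mem _ hy
  have step2 := hcont.image_closure step1
  exact closure_mono himg step2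

lemma iterate_mem {φ : ℝ → ℝ} (hm : Set.MapsTo φ unitI unitI) {x : ℝ}
    (hx : x ∈ unitI) : ∀ n, φ^[n] x ∈ unitI := by
  intro n
  induction n with
  | zero => exact hx
  | succ n ih => rw [Function.iterate_succ_apply']; exact hm ih

lemma fixed_of_tendsto {φ : ℝ → ℝ} (hc : ContinuousOn φ unitI)
    {x L : ℝ} (hmem : ∀ n, φ^[n] x ∈ unitI)
    (hT : Filter.Tendsto (fun n => φ^[n] x) Filter.atTop (nhds L)) :
    L ∈ unitI ∧ φ L = L := by
  have hL : L ∈ unitI :=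
    isClosed_Icc.mem_of_tendsto hT (Filter.Eventually.of_forall hmem)
  have hTw : Filter.Tendsto (fun n => φ^[n] x) Filter.atTop (nhdsWithin L unitI) :=
    tendsto_nhdsWithin_of_tendsto_nhds_of_eventually_within _ hT
      (Filter.Eventually.of_forall hmem)
  have h1 : Filter.Tendsto (fun n => φ (φ^[n] x)) Filter.atTop (nhds (φ L)) :=
    ((hc L hL).tendsto).comp hTw
  have h2 : Filter.Tendsto (fun n => φ (φ^[n] x)) Filter.atTop (nhds L) := by
    have h3 := hT.comp (Filter.tendsto_add_atTop_nat 1)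
    have he : ((fun n => φ^[n] x) ∘ fun n => n + 1) = fun n => φ (φ^[n] x) := by
      funext n
      simp [Function.comp, Function.iterate_succ_apply']
    rwa [he] at h3
  exact ⟨hL, tendsto_nhds_unique h1 h2⟩

lemma f_tendsto_zero {f g : ℝ → ℝ} (h : memC f g) {x : ℝ} (hx : x ∈ unitI) :
    Filter.Tendsto (fun n => f^[n] x) Filter.atTop (nhds 0) := by
  have hmem : ∀ n, f^[n] x ∈ unitI := iterate_mem h.2.2.1 hx
  have hle : ∀ y ∈ unitI, f y ≤ y := by
    intro y hy
    by_cases hy0 : y = 0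
    · subst hy0; rw [h.2.2.2.2.1]
    · exact le_of_lt (h.2.2.2.2.2.2.1 y hy hy0).2
  have hA : Antitone (fun n => f^[n] x) := by
    apply antitone_nat_of_succ_le
    intro n
    rw [Function.iterate_succ_apply']
    exact hle _ (hmem n)
  have hbdd : BddBelow (Set.range fun n => f^[n] x) :=
    ⟨0, by rintro y ⟨n, rfl⟩; exact (hmem n).1⟩
  have hT := tendsto_atTop_ciInf hA hbdd
  obtain ⟨hL, hfix⟩ := fixed_of_tendsto h.1 hmem hT
  have hL0 : (⨅ n, f^[n] x) = 0 := by
    by_contra hne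
    exact absurd hfix (ne_of_lt (h.2.2.2.2.2.2.1 _ hL hne).2)
  rwa [hL0] at hT

lemma g_tendsto_one {f g : ℝ → ℝ} (h : memC f g) {x : ℝ} (hx : x ∈ unitI) :
    Filter.Tendsto (fun n => g^[n] x) Filter.atTop (nhds 1) := by
  have hmem : ∀ n, g^[n] x ∈ unitI := iterate_mem h.2.2.2.1 hx
  have hle : ∀ y ∈ unitI, y ≤ g y := by
    intro y hy
    by_cases hy1 : y = 1
    · subst hy1; rw [h.2.2.2.2.2.1]
    · exact le_of_lt (h.2.2.2.2.2.2.2.1 y hy hy1).1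
  have hA : Monotone (fun n => g^[n] x) := by
    apply monotone_nat_of_le_succ
    intro n
    rw [Function.iterate_succ_apply']
    exact hle _ (hmem n)
  have hbdd : BddAbove (Set.range fun n => g^[n] x) :=
    ⟨1, by rintro y ⟨n, rfl⟩; exact (hmem n).2⟩
  have hT := tendsto_atTop_ciSup hA hbdd
  obtain ⟨hL, hfix⟩ := fixed_of_tendsto h.2.1 hmem hT
  have hL1 : (⨆ n, g^[n] x) = 1 := by
    by_contra hne
    exact absurd hfix.symm (ne_of_lt (h.2.2.2.2.2.2.2.1 _ hL hne).1)
  rwa [hL1] at hT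

lemma foldl_replicate (φ : ℝ → ℝ) (x : ℝ) :
    ∀ n, (List.replicate n φ).foldl (fun a h => h a) x = φ^[n] x := by
  intro n
  induction n generalizing x with
  | zero => rfl
  | succ n ih =>
    rw [List.replicate_succ, List.foldl_cons, ih, ← Function.iterate_succ_apply]

lemma zero_mem_closure {f g : ℝ → ℝ} (h : memC f g) {x : ℝ} (hx : x ∈ unitI) :
    (0 : ℝ) ∈ closure (orbit f g x) := by
  have hT : Filter.Tendsto (fun n => f^[n+1] x) Filter.atTop (nhds 0) := by
    have := (f_tendsto_zero h hx).comp (Filter.tendsto_add_atTop_nat 1)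
    simpa [Function.comp_def] using this
  refine mem_closure_of_tendsto hT (Filter.Eventually.of_forall fun n => ?_)
  exact ⟨List.replicate (n+1) f, by simp, fun u hu => Or.inl (List.eq_of_mem_replicate hu),
    (foldl_replicate f x (n+1)).symm⟩

lemma one_mem_closure {f g : ℝ → ℝ} (h : memC f g) {x : ℝ} (hx : x ∈ unitI) :
    (1 : ℝ) ∈ closure (orbit f g x) := by
  have hT : Filter.Tendsto (fun n => g^[n+1] x) Filter.atTop (nhds 1) := by
    have := (g_tendsto_one h hx).comp (Filter.tendsto_add_atTop_nat 1)
    simpa [Function.comp_def] using this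
  refine mem_closure_of_tendsto hT (Filter.Eventually.of_forall fun n => ?_)
  exact ⟨List.replicate (n+1) g, by simp, fun u hu => Or.inr (List.eq_of_mem_replicate hu),
    (foldl_replicate g x (n+1)).symm⟩

lemma closure_orbit_zero_subset {f g : ℝ → ℝ} (h : memC f g) {x : ℝ} (hx : x ∈ unitI) :
    closure (orbit f g 0) ⊆ closure (orbit f g x) :=
  closure_minimal (closure_invariant h hx (zero_mem_closure h hx)) isClosed_closure

lemma zero_mem_unit : (0 : ℝ) ∈ unitI := ⟨le_refl 0, zero_le_one⟩
lemma one_mem_unit : (1 : ℝ) ∈ unitI := ⟨zero_le_one, le_refl 1⟩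

lemma zero_mem_orbit {f g : ℝ → ℝ} (h : memC f g) : (0 : ℝ) ∈ orbit f g 0 :=
  ⟨[f], by simp, fun u hu => Or.inl (by simpa using hu), by simp [h.2.2.2.2.1]⟩

lemma M_minimal {f g : ℝ → ℝ} (h : memC f g) :
    IsMinimalSet f g (closure (orbit f g 0)) := by
  have h0M : (0 : ℝ) ∈ closure (orbit f g 0) := subset_closure (zero_mem_orbit h)
  have hMsub : closure (orbit f g 0) ⊆ unitI :=
    closure_minimal (orbit_subset h zero_mem_unit) isClosed_Icc
  refine ⟨⟨0, h0M⟩, hMsub, fun y hy => ?_⟩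
  have hyI : y ∈ unitI := hMsub hy
  apply le_antisymm
  · exact closure_minimal (closure_invariant h zero_mem_unit hy) isClosed_closure
  · exact closure_orbit_zero_subset h hyI

end UMSAux

theorem unique_minimal_set (f g : ℝ → ℝ) (h : memC f g) :
    (∃! M : Set ℝ, IsMinimalSet f g M) ∧
    IsMinimalSet f g (closure (orbit f g 0)) ∧
    closure (orbit f g 0) = closure (orbit f g 1) := by
  have hM := UMSAux.M_minimal h
  refine ⟨⟨closure (orbit f g 0), hM, ?_⟩, hM, ?_⟩
  · rintro N ⟨⟨x, hxN⟩, hNsub, hmin⟩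
    have hx : x ∈ unitI := hNsub hxN
    have h0N : (0 : ℝ) ∈ N := by
      rw [← hmin x hxN]
      exact UMSAux.zero_mem_closure h hx
    exact (hmin 0 h0N).symm
  · have h1M : (1 : ℝ) ∈ closure (orbit f g 0) :=
      UMSAux.one_mem_closure h UMSAux.zero_mem_unit
    exact (hM.2.2 1 h1M).symm
end

section
/- Let (f,g) ∈ 𝒞 and let 𝒦 ⊆ [0,1] be a hiding region for (f,g), i.e., a proper nonempty subset of [0,1] that is a locally finite disjoint union of closed intervals with nonempty interior, satisfying 𝒦 ∩ f([0,1]) ⊆ f(𝒦) and 𝒦 ∩ g([0,1]) ⊆ g(𝒦). Then 0 ∉ 𝒦 and 1 ∉ 𝒦. -/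
def IsRegion (K : Set ℝ) : Prop :=
  ∃ S : Finset (ℝ × ℝ), S.Nonempty ∧ (∀ p ∈ S, p.1 < p.2) ∧
    (∀ p ∈ S, ∀ q ∈ S, p ≠ q → Disjoint (Set.Icc p.1 p.2) (Set.Icc q.1 q.2)) ∧
    K = ⋃ p ∈ S, Set.Icc p.1 p.2

def IsHidingRegion (f g : ℝ → ℝ) (K : Set ℝ) : Prop :=
  IsRegion K ∧ K ⊆ unitI ∧ K ≠ unitI ∧
  K ∩ f '' unitI ⊆ f '' K ∧ K ∩ g '' unitI ⊆ g '' K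

theorem hiding_region_not_mem_endpoints (f g : ℝ → ℝ) (K : Set ℝ)
    (h : memC f g) (hK : IsHidingRegion f g K) :
    (0 : ℝ) ∉ K ∧ (1 : ℝ) ∉ K := by
  obtain ⟨hfc, hgc, hfm, hgm, hf0, hg1, hfx, hgx, hfs, hgs⟩ := h
  obtain ⟨⟨S, hSne, hord, hdisj, hKeq⟩, hKI, hKne, hhf, hhg⟩ := hK
  have hsubK : ∀ q ∈ S, Set.Icc q.1 q.2 ⊆ K := fun q hq => by
    rw [hKeq]; exact Set.subset_iUnion₂ (s := fun p _ => Set.Icc p.1 p.2) q hq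
  constructor
  · intro h0
    obtain ⟨p, hpS, hp0⟩ := Set.mem_iUnion₂.mp (hKeq ▸ h0)
    have hpI : Set.Icc p.1 p.2 ⊆ unitI := (hsubK p hpS).trans hKI
    have hple : p.1 < p.2 := hord p hpS
    have hp1I : p.1 ∈ unitI := hpI ⟨le_rfl, hple.le⟩
    have hp2I : p.2 ∈ unitI := hpI ⟨hple.le, le_rfl⟩
    have hp1 : p.1 = 0 := le_antisymm hp0.1 hp1I.1
    have hb0 : 0 < p.2 := hp1 ▸ hple
    have hb1 : p.2 < 1 := by
      rcases lt_or_eq_of_le hp2I.2 with hlt | heq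
      · exact hlt
      · exfalso
        apply hKne
        apply le_antisymm hKI
        intro y hy
        apply hsubK p hpS
        rw [hp1, heq]; exact hy
    -- key: points of K above p.2 belong to intervals starting above p.2
    have key : ∀ x ∈ K, p.2 < x → ∃ q ∈ S, p.2 < q.1 ∧ q.1 ≤ x := by
      intro x hx hbx
      obtain ⟨q, hqS, hxq⟩ := Set.mem_iUnion₂.mp (hKeq ▸ hx)
      refine ⟨q, hqS, ?_, hxq.1⟩
      by_contra hle
      push_neg at hle
      have hqne : q ≠ p := by
        rintro rfl; exact absurd hxq.2 (not_le.mpr hbx)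
      have hq1I : q.1 ∈ unitI := ((hsubK q hqS).trans hKI) ⟨le_rfl, (hord q hqS).le⟩
      exact Set.disjoint_left.mp (hdisj q hqS p hpS hqne)
        ⟨le_rfl, (hord q hqS).le⟩ ⟨hp1 ▸ hq1I.1, hle⟩
    have gap : ∃ ε > 0, ∀ x, p.2 < x → x < p.2 + ε → x ∉ K := by
      set T := (S.image Prod.fst).filter (fun a => p.2 < a) with hT
      by_cases hTne : T.Nonempty
      · refine ⟨T.min' hTne - p.2, ?_, ?_⟩
        · have hm : p.2 < T.min' hTne := (Finset.mem_filter.mp (T.min'_mem hTne)).2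
          linarith
        · intro x hbx hxlt hxK
          obtain ⟨q, hqS, hbq, hqx⟩ := key x hxK hbx
          have hqT : q.1 ∈ T := by
            exact Finset.mem_filter.mpr ⟨Finset.mem_image_of_mem Prod.fst hqS, hbq⟩
          have := T.min'_le _ hqT
          linarith
      · refine ⟨1, one_pos, fun x hbx _ hxK => ?_⟩
        obtain ⟨q, hqS, hbq, _⟩ := key x hxK hbx
        exact hTne ⟨q.1, by
          exact Finset.mem_filter.mpr ⟨Finset.mem_image_of_mem Prod.fst hqS, hbq⟩⟩
    obtain ⟨ε, hε, hgap⟩ := gap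
    have hfb : f p.2 < p.2 := (hfx p.2 hp2I (ne_of_gt hb0)).2
    have hcw : ContinuousWithinAt f unitI p.2 := hfc.continuousWithinAt hp2I
    have hnb : f ⁻¹' Set.Iio p.2 ∈ nhdsWithin p.2 unitI := hcw (Iio_mem_nhds hfb)
    rw [Metric.mem_nhdsWithin_iff] at hnb
    obtain ⟨η, hη, hball⟩ := hnb
    set m := min ε (min η (1 - p.2)) with hm
    have hm1 : m ≤ ε := min_le_left _ _
    have hm2 : m ≤ η := (min_le_right _ _).trans (min_le_left _ _)
    have hm3 : m ≤ 1 - p.2 := (min_le_right _ _).trans (min_le_right _ _)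
    have hm0 : 0 < m := lt_min hε (lt_min hη (by linarith))
    set x := p.2 + m / 2 with hxdef
    have hbx : p.2 < x := by rw [hxdef]; linarith
    have hxI : x ∈ unitI := ⟨by linarith [hp2I.1], by rw [hxdef]; linarith⟩
    have hxball : x ∈ Metric.ball p.2 η := by
      rw [Metric.mem_ball, Real.dist_eq, abs_of_pos (by linarith : (0:ℝ) < x - p.2)]
      rw [hxdef]; linarith
    have hfxlt : f x < p.2 := hball ⟨hxball, hxI⟩
    have hfx0 : 0 < f x := (hfx x hxI (ne_of_gt (lt_of_le_of_lt hp2I.1 hbx))).1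
    have hfxK : f x ∈ K := hsubK p hpS ⟨hp1 ▸ hfx0.le, hfxlt.le⟩
    obtain ⟨k, hkK, hkfx⟩ := hhf ⟨hfxK, ⟨x, hxI, rfl⟩⟩
    have hkx : k = x := hfs.injOn (hKI hkK) hxI hkfx
    exact hgap x hbx (by rw [hxdef]; linarith) (hkx ▸ hkK)
  · intro h1
    obtain ⟨p, hpS, hp1m⟩ := Set.mem_iUnion₂.mp (hKeq ▸ h1)
    have hpI : Set.Icc p.1 p.2 ⊆ unitI := (hsubK p hpS).trans hKI
    have hple : p.1 < p.2 := hord p hpS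
    have hp1I : p.1 ∈ unitI := hpI ⟨le_rfl, hple.le⟩
    have hp2I : p.2 ∈ unitI := hpI ⟨hple.le, le_rfl⟩
    have hp2 : p.2 = 1 := le_antisymm hp2I.2 hp1m.2
    have ha1 : p.1 < 1 := hp2 ▸ hple
    have ha0 : 0 < p.1 := by
      rcases lt_or_eq_of_le hp1I.1 with hlt | heq
      · exact hlt
      · exfalso
        apply hKne
        apply le_antisymm hKI
        intro y hy
        apply hsubK p hpS
        rw [← heq, hp2]; exact hy
    have key : ∀ x ∈ K, x < p.1 → ∃ q ∈ S, q.2 < p.1 ∧ x ≤ q.2 := by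
      intro x hx hbx
      obtain ⟨q, hqS, hxq⟩ := Set.mem_iUnion₂.mp (hKeq ▸ hx)
      refine ⟨q, hqS, ?_, hxq.2⟩
      by_contra hle
      push_neg at hle
      have hqne : q ≠ p := by
        rintro rfl; exact absurd hxq.1 (not_le.mpr hbx)
      have hq2I : q.2 ∈ unitI := ((hsubK q hqS).trans hKI) ⟨(hord q hqS).le, le_rfl⟩
      exact Set.disjoint_left.mp (hdisj q hqS p hpS hqne)
        ⟨(hord q hqS).le, le_rfl⟩ ⟨hle, hp2 ▸ hq2I.2⟩
    have gap : ∃ ε > 0, ∀ x, x < p.1 → p.1 - ε < x → x ∉ K := by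
      set T := (S.image Prod.snd).filter (fun a => a < p.1) with hT
      by_cases hTne : T.Nonempty
      · refine ⟨p.1 - T.max' hTne, ?_, ?_⟩
        · have hm : T.max' hTne < p.1 := (Finset.mem_filter.mp (T.max'_mem hTne)).2
          linarith
        · intro x hbx hxlt hxK
          obtain ⟨q, hqS, hbq, hqx⟩ := key x hxK hbx
          have hqT : q.2 ∈ T := by
            exact Finset.mem_filter.mpr ⟨Finset.mem_image_of_mem Prod.snd hqS, hbq⟩
          have := T.le_max' _ hqT
          linarith
      · refine ⟨1, one_pos, fun x hbx _ hxK => ?_⟩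
        obtain ⟨q, hqS, hbq, _⟩ := key x hxK hbx
        exact hTne ⟨q.2, by
          exact Finset.mem_filter.mpr ⟨Finset.mem_image_of_mem Prod.snd hqS, hbq⟩⟩
    obtain ⟨ε, hε, hgap⟩ := gap
    have hga : p.1 < g p.1 := (hgx p.1 hp1I (ne_of_lt ha1)).1
    have hcw : ContinuousWithinAt g unitI p.1 := hgc.continuousWithinAt hp1I
    have hnb : g ⁻¹' Set.Ioi p.1 ∈ nhdsWithin p.1 unitI := hcw (Ioi_mem_nhds hga)
    rw [Metric.mem_nhdsWithin_iff] at hnb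
    obtain ⟨η, hη, hball⟩ := hnb
    set m := min ε (min η p.1) with hm
    have hm1 : m ≤ ε := min_le_left _ _
    have hm2 : m ≤ η := (min_le_right _ _).trans (min_le_left _ _)
    have hm3 : m ≤ p.1 := (min_le_right _ _).trans (min_le_right _ _)
    have hm0 : 0 < m := lt_min hε (lt_min hη ha0)
    set x := p.1 - m / 2 with hxdef
    have hbx : x < p.1 := by rw [hxdef]; linarith
    have hxI : x ∈ unitI := ⟨by rw [hxdef]; linarith, by linarith [hp1I.2]⟩
    have hxball : x ∈ Metric.ball p.1 η := by
      rw [Metric.mem_ball, Real.dist_eq, abs_of_neg (by linarith : x - p.1 < (0:ℝ))]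
      rw [hxdef]; linarith
    have hgxgt : p.1 < g x := hball ⟨hxball, hxI⟩
    have hgx1 : g x < 1 := (hgx x hxI (ne_of_lt (lt_of_lt_of_le hbx hp1I.2))).2
    have hgxK : g x ∈ K := hsubK p hpS ⟨hgxgt.le, hp2 ▸ hgx1.le⟩
    obtain ⟨k, hkK, hkgx⟩ := hhg ⟨hgxK, ⟨x, hxI, rfl⟩⟩
    have hkx : k = x := hgs.injOn (hKI hkK) hxI hkgx
    exact hgap x hbx (by rw [hxdef]; linarith) (hkx ▸ hkK)
end

section
/- For every integer n ≥ 3 there exists an n-template: a finite disjoint union 𝒯 = ⨿ T_i of closed intervals with nonempty interior contained in (0, n), ordered increasingly, such that (1) T_m (the last interval) is the only interval contained in (n−1, n); (2) T₀ is the only interval contained in (0,1); (3) for every i ≤ m−1 there exists i' with T_i ⊆ f(T_{i'}), where f(x) = (1−1/n)x; and (4) for every i ≤ m−1 there exists i' with T_i ⊆ g(T_{i'}), where g(x) = x − 1. -/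
noncomputable section
namespace TemplateCon

attribute [local instance] Classical.propDecidable

def Nr (n : ℕ) : ℝ := n
def muc (n : ℕ) : ℝ := Nr n / (Nr n - 1)
def hpt (n : ℕ) : ℝ := 1 - 1 / Nr n + Real.sqrt 2 / (2 * Nr n)

def step (n : ℕ) (s : Finset ℝ) : Finset ℝ :=
  s ∪ (s.filter (· < Nr n - 1)).image (· + 1)
    ∪ (s.filter (· < Nr n - 1)).image (· * muc n)

def Vset (n : ℕ) : Finset ℝ := (step n)^[2 * n ^ 2] {hpt n}

variable {n : ℕ}

lemma threeN (hn : 3 ≤ n) : (3 : ℝ) ≤ Nr n := by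
  unfold Nr; exact_mod_cast hn

lemma Npos (hn : 3 ≤ n) : (0 : ℝ) < Nr n := lt_of_lt_of_le (by norm_num) (threeN hn)
lemma Nne (hn : 3 ≤ n) : Nr n ≠ 0 := ne_of_gt (Npos hn)
lemma Nm1_ge (hn : 3 ≤ n) : (2 : ℝ) ≤ Nr n - 1 := by have := threeN hn; linarith
lemma Nm1_pos (hn : 3 ≤ n) : (0 : ℝ) < Nr n - 1 := lt_of_lt_of_le (by norm_num) (Nm1_ge hn)
lemma Nm1_ne (hn : 3 ≤ n) : Nr n - 1 ≠ 0 := ne_of_gt (Nm1_pos hn)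

lemma mu_pos (hn : 3 ≤ n) : 0 < muc n := div_pos (Npos hn) (Nm1_pos hn)
lemma one_le_mu (hn : 3 ≤ n) : 1 ≤ muc n := by
  rw [muc, le_div_iff₀ (Nm1_pos hn)]; linarith
lemma lam_mul_mu (hn : 3 ≤ n) : (1 - 1 / Nr n) * muc n = 1 := by
  have h1 := Nne hn; have h2 := Nm1_ne hn
  rw [muc]; field_simp

lemma sqrt2_lt_two : Real.sqrt 2 < 2 := by
  have h := Real.sqrt_lt_sqrt (by norm_num : (0:ℝ) ≤ 2) (by norm_num : (2:ℝ) < 4)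
  have h4 : Real.sqrt 4 = 2 := by
    rw [show (4:ℝ) = 2 ^ 2 by norm_num, Real.sqrt_sq (by norm_num : (0:ℝ) ≤ 2)]
  linarith
lemma sqrt2_pos : 0 < Real.sqrt 2 := Real.sqrt_pos.mpr (by norm_num)

lemma lam_lt_h (hn : 3 ≤ n) : 1 - 1 / Nr n < hpt n := by
  have h1 : 0 < Real.sqrt 2 / (2 * Nr n) :=
    div_pos sqrt2_pos (by have := Npos hn; linarith)
  unfold hpt; linarith
lemma h_lt_one (hn : 3 ≤ n) : hpt n < 1 := by
  have h2 : Real.sqrt 2 / (2 * Nr n) < 1 / Nr n := by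
    rw [div_lt_div_iff₀ (by have := Npos hn; linarith) (Npos hn)]
    have := sqrt2_lt_two; have := Npos hn; nlinarith
  unfold hpt; linarith
lemma h_twothirds (hn : 3 ≤ n) : (2/3 : ℝ) ≤ hpt n := by
  have h1 : (1:ℝ)/Nr n ≤ 1/3 := by
    rw [div_le_div_iff₀ (Npos hn) (by norm_num)]; have := threeN hn; linarith
  have h2 : 0 < Real.sqrt 2 / (2 * Nr n) :=
    div_pos sqrt2_pos (by have := Npos hn; linarith)
  unfold hpt; linarith
lemma h_pos (hn : 3 ≤ n) : 0 < hpt n := lt_of_lt_of_le (by norm_num) (h_twothirds hn)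

/-- the invariant satisfied by all generated values -/
def GoodPt (n : ℕ) (v : ℝ) : Prop :=
  (∃ a q : ℚ, 0 < a ∧ v = (a : ℝ) * Real.sqrt 2 + (q : ℝ)) ∧
  (v = hpt n ∨ 1 < v) ∧ hpt n ≤ v ∧ v < Nr n

lemma good_h (hn : 3 ≤ n) : GoodPt n (hpt n) := by
  refine ⟨⟨1/(2*(n:ℚ)), 1 - 1/(n:ℚ), ?_, ?_⟩, Or.inl rfl, le_refl _, ?_⟩
  · have : (0:ℚ) < (n:ℚ) := by exact_mod_cast lt_of_lt_of_le (by norm_num) hn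
    positivity
  · have hne : ((n:ℚ):ℝ) ≠ 0 := by
      have := Nne hn; unfold Nr at this; push_cast; exact_mod_cast this
    push_cast
    unfold hpt Nr
    ring
  · have := h_lt_one hn; have := threeN hn; linarith

lemma mem_step {s : Finset ℝ} {v : ℝ} :
    v ∈ step n s ↔ v ∈ s ∨ (∃ u ∈ s, u < Nr n - 1 ∧ v = u + 1) ∨
      (∃ u ∈ s, u < Nr n - 1 ∧ v = u * muc n) := by
  unfold step
  simp only [Finset.mem_union, Finset.mem_image, Finset.mem_filter]
  constructor
  · rintro ((h | ⟨u, ⟨hu1, hu2⟩, hu3⟩) | ⟨u, ⟨hu1, hu2⟩, hu3⟩)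
    · exact Or.inl h
    · exact Or.inr (Or.inl ⟨u, hu1, hu2, hu3.symm⟩)
    · exact Or.inr (Or.inr ⟨u, hu1, hu2, hu3.symm⟩)
  · rintro (h | ⟨u, hu1, hu2, hu3⟩ | ⟨u, hu1, hu2, hu3⟩)
    · exact Or.inl (Or.inl h)
    · exact Or.inl (Or.inr ⟨u, ⟨hu1, hu2⟩, hu3.symm⟩)
    · exact Or.inr ⟨u, ⟨hu1, hu2⟩, hu3.symm⟩

lemma subset_step (s : Finset ℝ) : s ⊆ step n s := fun v hv => mem_step.mpr (Or.inl hv)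

lemma good_succ_add (hn : 3 ≤ n) {u : ℝ} (hu : GoodPt n u) (hlt : u < Nr n - 1) :
    GoodPt n (u + 1) := by
  obtain ⟨⟨a, q, ha, hrep⟩, _, hh, hN⟩ := hu
  have hp := h_pos hn
  refine ⟨⟨a, q + 1, ha, by push_cast; rw [hrep]; ring⟩, Or.inr (by linarith), by linarith, by linarith⟩

lemma good_succ_mul (hn : 3 ≤ n) {u : ℝ} (hu : GoodPt n u) (hlt : u < Nr n - 1) :
    GoodPt n (u * muc n) := by
  obtain ⟨⟨a, q, ha, hrep⟩, _, hh, hN⟩ := hu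
  have hmu := mu_pos hn
  have hmu1 := one_le_mu hn
  have hlam : 1 - 1 / Nr n < u := lt_of_lt_of_le (lam_lt_h hn) hh
  have h1 : 1 < u * muc n := by
    have := lam_mul_mu hn
    calc 1 = (1 - 1/Nr n) * muc n := this.symm
    _ < u * muc n := by apply mul_lt_mul_of_pos_right hlam hmu
  have hN' : u * muc n < Nr n := by
    have : u * muc n < (Nr n - 1) * muc n :=
      mul_lt_mul_of_pos_right hlt hmu
    have he : (Nr n - 1) * muc n = Nr n := by
      rw [muc, mul_div_assoc']; exact mul_div_cancel_left₀ _ (Nm1_ne hn)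
    linarith
  have hq : (0:ℚ) < (n:ℚ) - 1 := by
    have : (3:ℚ) ≤ (n:ℚ) := by exact_mod_cast hn
    linarith
  refine ⟨⟨a * ((n:ℚ)/((n:ℚ)-1)), q * ((n:ℚ)/((n:ℚ)-1)), ?_, ?_⟩, Or.inr h1, ?_, hN'⟩
  · positivity
  · push_cast [hrep]
    have : ((n:ℝ) - 1) ≠ 0 := by have := Nm1_ne hn; unfold Nr at this; exact_mod_cast this
    rw [muc]; unfold Nr; field_simp
  · calc hpt n ≤ u := hh
    _ = u * 1 := (mul_one u).symm
    _ ≤ u * muc n := by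
        apply mul_le_mul_of_nonneg_left hmu1; linarith [h_pos hn]

lemma good_iter (hn : 3 ≤ n) : ∀ k, ∀ v ∈ (step n)^[k] {hpt n}, GoodPt n v := by
  intro k
  induction k with
  | zero => intro v hv; simp at hv; subst hv; exact good_h hn
  | succ k ih =>
    intro v hv
    rw [Function.iterate_succ_apply'] at hv
    rcases mem_step.mp hv with h | ⟨u, hu, hlt, rfl⟩ | ⟨u, hu, hlt, rfl⟩
    · exact ih v h
    · exact good_succ_add hn (ih u hu) hlt
    · exact good_succ_mul hn (ih u hu) hlt

lemma good_V (hn : 3 ≤ n) : ∀ v ∈ Vset n, GoodPt n v := good_iter hn _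


lemma step_gain (hn : 3 ≤ n) {u : ℝ} (hu23 : 2/3 ≤ u) :
    u + 1/(2 * Nr n) ≤ u * muc n := by
  have h1 := Nm1_pos hn
  have h2 := Npos hn
  have h3 := threeN hn
  have key : u * muc n - (u + 1/(2*Nr n)) =
      (2 * Nr n * u - (Nr n - 1)) / (2 * Nr n * (Nr n - 1)) := by
    rw [muc]; field_simp; ring
  have hnum : 0 ≤ 2 * Nr n * u - (Nr n - 1) := by nlinarith
  have : 0 ≤ u * muc n - (u + 1/(2*Nr n)) := by
    rw [key]; positivity
  linarith

lemma good_u23 (hn : 3 ≤ n) {v : ℝ} (hv : GoodPt n v) : 2/3 ≤ v :=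
  le_trans (h_twothirds hn) hv.2.2.1

lemma grow (hn : 3 ≤ n) : ∀ k, ∀ v, v ∈ (step n)^[k+1] {hpt n} →
    v ∉ (step n)^[k] {hpt n} → hpt n + ((k:ℝ)+1) * (1/(2*Nr n)) ≤ v := by
  have h2N : (0:ℝ) < 2 * Nr n := by have := Npos hn; linarith
  have hfrac1 : 1/(2*Nr n) ≤ 1 := by
    rw [div_le_one h2N]; have := threeN hn; linarith
  intro k
  induction k with
  | zero =>
    intro v hv hnv
    rw [Function.iterate_succ_apply'] at hv
    rw [Function.iterate_zero_apply] at hnv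
    rw [Function.iterate_zero_apply] at hv
    rcases mem_step.mp hv with h | ⟨u, hu, hlt, rfl⟩ | ⟨u, hu, hlt, rfl⟩
    · exact absurd h hnv
    · rw [Finset.mem_singleton] at hu; subst hu
      push_cast; linarith
    · rw [Finset.mem_singleton] at hu; subst hu
      have := step_gain hn (le_trans (by norm_num) (h_twothirds hn))
      push_cast; linarith [step_gain hn (h_twothirds hn)]
  | succ k ih =>
    intro v hv hnv
    rw [Function.iterate_succ_apply'] at hv
    rcases mem_step.mp hv with h | ⟨u, hu, hlt, hve⟩ | ⟨u, hu, hlt, hve⟩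
    · exact absurd h hnv
    · have hunotk : u ∉ (step n)^[k] {hpt n} := by
        intro hk
        exact hnv (by
          rw [Function.iterate_succ_apply']
          exact mem_step.mpr (Or.inr (Or.inl ⟨u, hk, hlt, hve⟩)))
      have := ih u hu hunotk
      subst hve; push_cast; push_cast at this; linarith
    · have hunotk : u ∉ (step n)^[k] {hpt n} := by
        intro hk
        exact hnv (by
          rw [Function.iterate_succ_apply']
          exact mem_step.mpr (Or.inr (Or.inr ⟨u, hk, hlt, hve⟩)))
      have h1 := ih u hu hunotk
      have h2 := step_gain hn (good_u23 hn (good_iter hn _ u hu))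
      subst hve; push_cast; push_cast at h1; linarith

lemma step_V_eq (hn : 3 ≤ n) : step n (Vset n) = Vset n := by
  have key : (step n)^[2*n^2+1] {hpt n} = (step n)^[2*n^2] {hpt n} := by
    apply Finset.Subset.antisymm
    · intro v hv
      by_contra hnv
      have hg := grow hn (2*n^2) v hv hnv
      have hgood := good_iter hn (2*n^2+1) v hv
      have hvN := hgood.2.2.2
      have hK : ((2*n^2 : ℕ):ℝ) * (1/(2*Nr n)) = Nr n := by
        unfold Nr
        have : ((n:ℝ)) ≠ 0 := by have := Nne hn; unfold Nr at this; exact this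
        push_cast; field_simp
      have hp := h_pos hn
      have h2N : (0:ℝ) < 1/(2*Nr n) := by
        have := Npos hn; positivity
      nlinarith
    · rw [Function.iterate_succ_apply']
      exact subset_step _
  unfold Vset
  rw [← Function.iterate_succ_apply' (step n) (2*n^2)]
  exact key

lemma closure_add (hn : 3 ≤ n) {v : ℝ} (hv : v ∈ Vset n) (hlt : v < Nr n - 1) :
    v + 1 ∈ Vset n := by
  rw [← step_V_eq hn]; exact mem_step.mpr (Or.inr (Or.inl ⟨v, hv, hlt, rfl⟩))

lemma closure_mul (hn : 3 ≤ n) {v : ℝ} (hv : v ∈ Vset n) (hlt : v < Nr n - 1) :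
    v * muc n ∈ Vset n := by
  rw [← step_V_eq hn]; exact mem_step.mpr (Or.inr (Or.inr ⟨v, hv, hlt, rfl⟩))

lemma h_mem_V : hpt n ∈ Vset n := by
  unfold Vset
  induction 2*n^2 with
  | zero => simp
  | succ k ih => rw [Function.iterate_succ_apply']; exact subset_step _ ih

lemma V_irr (hn : 3 ≤ n) {v : ℝ} (hv : v ∈ Vset n) : Irrational v := by
  obtain ⟨⟨a, q, ha, hrep⟩, _⟩ := good_V hn v hv
  rw [hrep]
  exact (irrational_sqrt_two.ratCast_mul (ne_of_gt ha)).add_ratCast (q := q)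

lemma V_ne_rat (hn : 3 ≤ n) {v : ℝ} (hv : v ∈ Vset n) (q : ℚ) : v ≠ (q:ℝ) :=
  (V_irr hn hv).ne_rat q

lemma V_ne_Nm1 (hn : 3 ≤ n) {v : ℝ} (hv : v ∈ Vset n) : v ≠ Nr n - 1 := by
  have := V_ne_rat hn hv ((n:ℚ) - 1)
  intro h
  apply this
  rw [h]; unfold Nr; push_cast; ring

def VTs (n : ℕ) : Finset ℝ := (Vset n).filter (· < Nr n - 1)
def Ws (n : ℕ) : Finset ℝ := (Vset n).filter (fun v => ¬ v < Nr n - 1)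

lemma mem_VTs {v : ℝ} : v ∈ VTs n ↔ v ∈ Vset n ∧ v < Nr n - 1 := Finset.mem_filter

lemma terminal_bounds (hn : 3 ≤ n) {v : ℝ} (hv : v ∈ Ws n) :
    Nr n - 1 < v ∧ v < Nr n := by
  obtain ⟨hvV, hnl⟩ := Finset.mem_filter.mp hv
  have hne := V_ne_Nm1 hn hvV
  have hgood := good_V hn v hvV
  exact ⟨lt_of_le_of_ne (not_lt.mp hnl) (Ne.symm hne), hgood.2.2.2⟩

def gam (n : ℕ) : ℝ :=
  (insert 1 ((Ws n).image (fun v => min (v - (Nr n - 1)) (Nr n - v)))).min'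
    (Finset.insert_nonempty _ _)
def gmin (n : ℕ) : ℝ :=
  (insert 1 (((VTs n ×ˢ VTs n).filter (fun p => p.1 < p.2)).image
    (fun p => p.2 - p.1))).min' (Finset.insert_nonempty _ _)
def mtop (n : ℕ) : ℝ :=
  (insert 1 ((VTs n).image (fun v => Nr n - 1 - v))).min' (Finset.insert_nonempty _ _)
def mq (n : ℕ) : ℝ := min (min (gam n) (gmin n)) (min (mtop n) (1 - hpt n))
def cc (n : ℕ) : ℝ := mq n / (8 * Nr n)
def alp (n : ℕ) : ℝ := Nr n - 1 + gam n / 4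
def bet (n : ℕ) : ℝ := Nr n - gam n / 4

lemma gam_pos (hn : 3 ≤ n) : 0 < gam n := by
  rw [gam, Finset.lt_min'_iff]
  intro y hy
  rcases Finset.mem_insert.mp hy with rfl | hy
  · norm_num
  · obtain ⟨v, hv, rfl⟩ := Finset.mem_image.mp hy
    have := terminal_bounds hn hv
    simp only [lt_min_iff]; constructor <;> linarith [this.1, this.2]

lemma gam_le_one : gam n ≤ 1 := by
  unfold gam
  exact Finset.min'_le _ 1 (Finset.mem_insert_self _ _)

lemma gam_le {v : ℝ} (hv : v ∈ Ws n) :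
    gam n ≤ v - (Nr n - 1) ∧ gam n ≤ Nr n - v := by
  have h := Finset.min'_le (insert 1 ((Ws n).image (fun v => min (v - (Nr n - 1)) (Nr n - v))))
    (min (v - (Nr n - 1)) (Nr n - v))
    (Finset.mem_insert_of_mem (Finset.mem_image_of_mem _ hv))
  rw [← gam] at h
  exact ⟨le_trans h (min_le_left _ _), le_trans h (min_le_right _ _)⟩

lemma gmin_pos : 0 < gmin n := by
  rw [gmin, Finset.lt_min'_iff]
  intro y hy
  rcases Finset.mem_insert.mp hy with rfl | hy
  · norm_num
  · obtain ⟨p, hp, rfl⟩ := Finset.mem_image.mp hy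
    have := (Finset.mem_filter.mp hp).2
    linarith

lemma gmin_le {v w : ℝ} (hv : v ∈ VTs n) (hw : w ∈ VTs n) (hlt : v < w) :
    gmin n ≤ w - v := by
  unfold gmin
  apply Finset.min'_le
  apply Finset.mem_insert_of_mem
  exact Finset.mem_image.mpr ⟨(v, w), Finset.mem_filter.mpr
    ⟨Finset.mem_product.mpr ⟨hv, hw⟩, hlt⟩, rfl⟩

lemma mtop_pos : 0 < mtop n := by
  rw [mtop, Finset.lt_min'_iff]
  intro y hy
  rcases Finset.mem_insert.mp hy with rfl | hy
  · norm_num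
  · obtain ⟨v, hv, rfl⟩ := Finset.mem_image.mp hy
    have := (mem_VTs.mp hv).2
    linarith

lemma mtop_le {v : ℝ} (hv : v ∈ VTs n) : mtop n ≤ Nr n - 1 - v := by
  unfold mtop
  exact Finset.min'_le _ _ (Finset.mem_insert_of_mem (Finset.mem_image_of_mem _ hv))

lemma mq_pos (hn : 3 ≤ n) : 0 < mq n := by
  have := gam_pos hn; have := @gmin_pos n; have := @mtop_pos n
  have := h_lt_one hn
  rw [mq]; simp only [lt_min_iff]; refine ⟨⟨by assumption, by assumption⟩, by assumption, by linarith⟩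

lemma mq_le_gam : mq n ≤ gam n := le_trans (min_le_left _ _) (min_le_left _ _)
lemma mq_le_gmin : mq n ≤ gmin n := le_trans (min_le_left _ _) (min_le_right _ _)
lemma mq_le_mtop : mq n ≤ mtop n := le_trans (min_le_right _ _) (min_le_left _ _)
lemma mq_le_head : mq n ≤ 1 - hpt n := le_trans (min_le_right _ _) (min_le_right _ _)
lemma mq_le_one : mq n ≤ 1 := le_trans mq_le_gam gam_le_one

lemma cc_pos (hn : 3 ≤ n) : 0 < cc n := by
  rw [cc]; have := mq_pos hn; have := Npos hn; positivity

lemma cc_lt_one (hn : 3 ≤ n) : cc n < 1 := by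
  rw [cc]
  have h1 := mq_le_one (n := n); have h2 := threeN hn; have h3 := mq_pos hn
  rw [div_lt_one (by linarith)]; linarith

lemma VT_le_N (hn : 3 ≤ n) {v : ℝ} (hv : v ∈ VTs n) : v ≤ Nr n := by
  have := (good_V hn v (mem_VTs.mp hv).1).2.2.2; linarith

lemma VT_pos (hn : 3 ≤ n) {v : ℝ} (hv : v ∈ VTs n) : 0 < v := by
  have := (good_V hn v (mem_VTs.mp hv).1).2.2.1; have := h_pos hn; linarith

lemma ccv_le (hn : 3 ≤ n) {v : ℝ} (hv : v ∈ VTs n) : cc n * v ≤ mq n / 8 := by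
  have h1 := VT_le_N hn hv
  have h2 := cc_pos hn
  have h3 : cc n * v ≤ cc n * Nr n := by
    apply mul_le_mul_of_nonneg_left h1 (le_of_lt h2)
  have h4 : cc n * Nr n = mq n / 8 := by
    rw [cc]; have := Nne hn; field_simp
  linarith

lemma ccv_pos (hn : 3 ≤ n) {v : ℝ} (hv : v ∈ VTs n) : 0 < cc n * v :=
  mul_pos (cc_pos hn) (VT_pos hn hv)

def pairOf (n : ℕ) (v : ℝ) : ℝ × ℝ := (v - cc n * v, v + cc n * v)
def Lst (n : ℕ) : List ℝ := (VTs n).sort (· ≤ ·)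
def TL (n : ℕ) : List (ℝ × ℝ) := (Lst n).map (pairOf n) ++ [(alp n, bet n)]

lemma h_mem_VT (hn : 3 ≤ n) : hpt n ∈ VTs n := by
  rw [mem_VTs]
  refine ⟨h_mem_V, ?_⟩
  have := h_lt_one hn; have := Nm1_ge hn; linarith

lemma mem_TL {p : ℝ × ℝ} :
    p ∈ TL n ↔ (∃ v ∈ VTs n, p = pairOf n v) ∨ p = (alp n, bet n) := by
  unfold TL
  simp only [List.mem_append, List.mem_map, List.mem_singleton, Lst, Finset.mem_sort]
  constructor
  · rintro (⟨v, hv, rfl⟩ | h)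
    · exact Or.inl ⟨v, hv, rfl⟩
    · exact Or.inr h
  · rintro (⟨v, hv, rfl⟩ | h)
    · exact Or.inl ⟨v, hv, rfl⟩
    · exact Or.inr h

lemma Nm1_lt_alp (hn : 3 ≤ n) : Nr n - 1 < alp n := by
  have := gam_pos hn; rw [alp]; linarith
lemma alp_lt_bet (hn : 3 ≤ n) : alp n < bet n := by
  have h1 := gam_le_one (n := n); have := gam_pos hn
  rw [alp, bet]; linarith
lemma bet_lt_N (hn : 3 ≤ n) : bet n < Nr n := by
  have := gam_pos hn; rw [bet]; linarith
lemma alp_pos (hn : 3 ≤ n) : 0 < alp n := by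
  have := Nm1_ge hn; have := gam_pos hn; rw [alp]; linarith
lemma one_lt_alp (hn : 3 ≤ n) : 1 < alp n := by
  have := Nm1_ge hn; have := gam_pos hn; rw [alp]; linarith

lemma member_sep_top (hn : 3 ≤ n) {v : ℝ} (hv : v ∈ VTs n) :
    v + cc n * v < Nr n - 1 := by
  have h1 := mtop_le hv
  have h2 := ccv_le hn hv
  have h3 := mq_le_mtop (n := n)
  have h4 := mq_pos hn
  linarith

lemma terminal_absorb (hn : 3 ≤ n) {w : ℝ} (hw : w ∈ Vset n) (hnl : ¬ w < Nr n - 1) :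
    alp n + mq n / 4 ≤ w ∧ w ≤ bet n - mq n / 4 := by
  have hmem : w ∈ Ws n := Finset.mem_filter.mpr ⟨hw, hnl⟩
  have h1 := gam_le hmem
  have h2 := mq_le_gam (n := n)
  have h3 := mq_pos hn
  have h5 := gam_pos hn
  constructor
  · rw [alp]; have := h1.1; linarith
  · rw [bet]; have := h1.2; linarith

lemma w_le_N (hn : 3 ≤ n) {w : ℝ} (hw : w ∈ Vset n) : w ≤ Nr n := by
  have := (good_V hn w hw).2.2.2; linarith

lemma ccw_le (hn : 3 ≤ n) {w : ℝ} (h0 : 0 ≤ w) (hN : w ≤ Nr n) :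
    cc n * w ≤ mq n / 8 := by
  have h2 := cc_pos hn
  have h3 : cc n * w ≤ cc n * Nr n := mul_le_mul_of_nonneg_left hN (le_of_lt h2)
  have h4 : cc n * Nr n = mq n / 8 := by
    rw [cc]; have := Nne hn; field_simp
  linarith

lemma cover_f (hn : 3 ≤ n) {v : ℝ} (hv : v ∈ VTs n) :
    ∃ q ∈ TL n, Set.Icc (v - cc n * v) (v + cc n * v) ⊆
      (fun x => (1 - 1 / Nr n) * x) '' Set.Icc q.1 q.2 := by
  obtain ⟨hvV, hvlt⟩ := mem_VTs.mp hv
  have hwV : v * muc n ∈ Vset n := closure_mul hn hvV hvlt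
  have hmu := mu_pos hn
  have hlam := lam_mul_mu hn
  have hmap : ∀ x : ℝ, (1 - 1/Nr n) * (x * muc n) = x := by
    intro x
    calc (1 - 1/Nr n) * (x * muc n) = x * ((1 - 1/Nr n) * muc n) := by ring
    _ = x := by rw [hlam, mul_one]
  by_cases hw : v * muc n < Nr n - 1
  · -- non-terminal: covered by member at v * muc n
    have hwVT : v * muc n ∈ VTs n := mem_VTs.mpr ⟨hwV, hw⟩
    refine ⟨pairOf n (v * muc n), mem_TL.mpr (Or.inl ⟨_, hwVT, rfl⟩), ?_⟩
    intro x hx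
    obtain ⟨hx1, hx2⟩ := hx
    refine ⟨x * muc n, ⟨?_, ?_⟩, hmap x⟩
    · show v * muc n - cc n * (v * muc n) ≤ x * muc n
      have : (v - cc n * v) * muc n ≤ x * muc n :=
        mul_le_mul_of_nonneg_right hx1 (le_of_lt hmu)
      nlinarith [this]
    · show x * muc n ≤ v * muc n + cc n * (v * muc n)
      have : x * muc n ≤ (v + cc n * v) * muc n :=
        mul_le_mul_of_nonneg_right hx2 (le_of_lt hmu)
      nlinarith [this]
  · -- terminal: covered by the top interval
    refine ⟨(alp n, bet n), mem_TL.mpr (Or.inr rfl), ?_⟩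
    have habs := terminal_absorb hn hwV hw
    have hccw : cc n * (v * muc n) ≤ mq n / 8 := by
      apply ccw_le hn
      · exact le_of_lt (mul_pos (VT_pos hn hv) hmu)
      · exact w_le_N hn hwV
    have hmq := mq_pos hn
    intro x hx
    obtain ⟨hx1, hx2⟩ := hx
    refine ⟨x * muc n, ⟨?_, ?_⟩, hmap x⟩
    · show alp n ≤ x * muc n
      have h5 : (v - cc n * v) * muc n ≤ x * muc n :=
        mul_le_mul_of_nonneg_right hx1 (le_of_lt hmu)
      have h6 : (v - cc n * v) * muc n = v * muc n - cc n * (v * muc n) := by ring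
      have := habs.1; linarith [h5, h6 ▸ h5]
    · show x * muc n ≤ bet n
      have h5 : x * muc n ≤ (v + cc n * v) * muc n :=
        mul_le_mul_of_nonneg_right hx2 (le_of_lt hmu)
      have h6 : (v + cc n * v) * muc n = v * muc n + cc n * (v * muc n) := by ring
      have := habs.2; linarith [h6 ▸ h5]

lemma cover_g (hn : 3 ≤ n) {v : ℝ} (hv : v ∈ VTs n) :
    ∃ q ∈ TL n, Set.Icc (v - cc n * v) (v + cc n * v) ⊆
      (fun x => x - 1) '' Set.Icc q.1 q.2 := by
  obtain ⟨hvV, hvlt⟩ := mem_VTs.mp hv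
  have hwV : v + 1 ∈ Vset n := closure_add hn hvV hvlt
  have hcc := cc_pos hn
  by_cases hw : v + 1 < Nr n - 1
  · have hwVT : v + 1 ∈ VTs n := mem_VTs.mpr ⟨hwV, hw⟩
    refine ⟨pairOf n (v + 1), mem_TL.mpr (Or.inl ⟨_, hwVT, rfl⟩), ?_⟩
    intro x hx
    obtain ⟨hx1, hx2⟩ := hx
    refine ⟨x + 1, ⟨?_, ?_⟩, by simp⟩
    · show (v + 1) - cc n * (v + 1) ≤ x + 1
      nlinarith
    · show x + 1 ≤ (v + 1) + cc n * (v + 1)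
      nlinarith
  · refine ⟨(alp n, bet n), mem_TL.mpr (Or.inr rfl), ?_⟩
    have habs := terminal_absorb hn hwV hw
    have hccv := ccv_le hn hv
    have hmq := mq_pos hn
    intro x hx
    obtain ⟨hx1, hx2⟩ := hx
    refine ⟨x + 1, ⟨?_, ?_⟩, by simp⟩
    · show alp n ≤ x + 1
      have := habs.1; linarith
    · show x + 1 ≤ bet n
      have := habs.2; linarith

lemma TL_bounds (hn : 3 ≤ n) : ∀ p ∈ TL n, p.1 < p.2 ∧ 0 < p.1 ∧ p.2 < Nr n := by
  intro p hp
  rcases mem_TL.mp hp with ⟨v, hv, rfl⟩ | rfl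
  · have h1 := ccv_pos hn hv
    have h2 := VT_pos hn hv
    have h3 : cc n * v < v := by
      have := cc_lt_one hn
      nlinarith
    have h4 := member_sep_top hn hv
    have h5 := Nm1_ge hn
    exact ⟨by simp [pairOf]; linarith, by simp [pairOf]; linarith,
      by simp [pairOf]; linarith⟩
  · exact ⟨alp_lt_bet hn, alp_pos hn, bet_lt_N hn⟩

lemma TL_chain (hn : 3 ≤ n) : (TL n).Chain' (fun p q => p.2 < q.1) := by
  apply List.Pairwise.isChain
  unfold TL
  rw [List.pairwise_append]
  refine ⟨?_, List.pairwise_singleton _ _, ?_⟩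
  · rw [List.pairwise_map]
    have hs : (Lst n).Pairwise (· < ·) := (Finset.sortedLT_sort _).pairwise
    apply hs.imp_of_mem
    intro v w hvm hwm hlt
    have hv : v ∈ VTs n := (Finset.mem_sort _).mp hvm
    have hw : w ∈ VTs n := (Finset.mem_sort _).mp hwm
    have h1 := gmin_le hv hw hlt
    have h2 := ccv_le hn hv
    have h3 := ccv_le hn hw
    have h4 := mq_le_gmin (n := n)
    have h5 := mq_pos hn
    show v + cc n * v < w - cc n * w
    linarith
  · intro p hp q hq
    rw [List.mem_singleton] at hq
    subst hq
    obtain ⟨v, hvm, rfl⟩ := List.mem_map.mp hp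
    have hv : v ∈ VTs n := (Finset.mem_sort _).mp hvm
    have h1 := member_sep_top hn hv
    have h2 := Nm1_lt_alp hn
    show v + cc n * v < alp n
    linarith

lemma TL_getLast : (TL n).getLast? = some (alp n, bet n) := by
  unfold TL
  rw [List.getLast?_append_of_ne_nil _ (by simp)]
  rfl

lemma Lst_head (hn : 3 ≤ n) : ∃ t, Lst n = hpt n :: t := by
  have hh : hpt n ∈ Lst n := (Finset.mem_sort _).mpr (h_mem_VT hn)
  cases hL : Lst n with
  | nil => rw [hL] at hh; simp at hh
  | cons a t =>
    rw [hL] at hh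
    have ha' : a ∈ Lst n := by rw [hL]; exact List.mem_cons_self
    have ha : a ∈ VTs n := (Finset.mem_sort _).mp ha'
    have hgood := good_V hn a (mem_VTs.mp ha).1
    rcases List.mem_cons.mp hh with he | ht
    · exact ⟨t, by rw [he]⟩
    · exfalso
      have hsort : (Lst n).Pairwise (· < ·) := (Finset.sortedLT_sort _).pairwise
      rw [hL, List.pairwise_cons] at hsort
      have halt := hsort.1 _ ht
      rcases hgood.2.1 with he1 | hgt
      · rw [he1] at halt; exact lt_irrefl _ halt
      · have := h_lt_one hn; linarith

lemma TL_head (hn : 3 ≤ n) : (TL n).head? = some (pairOf n (hpt n)) := by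
  obtain ⟨t, ht⟩ := Lst_head hn
  unfold TL
  rw [ht]
  rfl

lemma head_in_01 (hn : 3 ≤ n) :
    Set.Icc (pairOf n (hpt n)).1 (pairOf n (hpt n)).2 ⊆ Set.Ioo (0:ℝ) 1 := by
  have hv := h_mem_VT hn
  have h1 := ccv_pos hn hv
  have h2 := cc_lt_one hn
  have h3 := h_pos hn
  have h4 := ccv_le hn hv
  have h5 := mq_le_head (n := n)
  have h6 := mq_pos hn
  intro x hx
  obtain ⟨hx1, hx2⟩ := hx
  simp only [pairOf] at hx1 hx2
  constructor
  · nlinarith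
  · nlinarith

lemma top_in_win (hn : 3 ≤ n) :
    Set.Icc (alp n) (bet n) ⊆ Set.Ioo (Nr n - 1) (Nr n) := by
  intro x hx
  obtain ⟨hx1, hx2⟩ := hx
  have := Nm1_lt_alp hn; have := bet_lt_N hn
  exact ⟨by linarith, by linarith⟩

lemma last_unique (hn : 3 ≤ n) : ∀ p ∈ TL n,
    Set.Icc p.1 p.2 ⊆ Set.Ioo (Nr n - 1) (Nr n) → (TL n).getLast? = some p := by
  intro p hp hsub
  rcases mem_TL.mp hp with ⟨v, hv, rfl⟩ | rfl
  · exfalso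
    have h1 := ccv_pos hn hv
    have hmem : (pairOf n v).1 ∈ Set.Icc (pairOf n v).1 (pairOf n v).2 := by
      simp only [pairOf, Set.mem_Icc]; constructor <;> linarith
    have := (hsub hmem).1
    simp only [pairOf] at this
    have h4 := member_sep_top hn hv
    linarith
  · exact TL_getLast

lemma head_unique (hn : 3 ≤ n) : ∀ p ∈ TL n,
    Set.Icc p.1 p.2 ⊆ Set.Ioo (0:ℝ) 1 → (TL n).head? = some p := by
  intro p hp hsub
  rcases mem_TL.mp hp with ⟨v, hv, rfl⟩ | rfl
  · have h1 := ccv_pos hn hv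
    have hmem : (pairOf n v).2 ∈ Set.Icc (pairOf n v).1 (pairOf n v).2 := by
      simp only [pairOf, Set.mem_Icc]; constructor <;> linarith
    have h2 := (hsub hmem).2
    simp only [pairOf] at h2
    have hgood := good_V hn v (mem_VTs.mp hv).1
    rcases hgood.2.1 with he | hgt
    · rw [he]; exact TL_head hn
    · exfalso; linarith
  · exfalso
    have hmem : alp n ∈ Set.Icc (alp n) (bet n) :=
      ⟨le_refl _, le_of_lt (alp_lt_bet hn)⟩
    have := (hsub hmem).2
    have := one_lt_alp hn
    linarith [(hsub hmem).2, one_lt_alp hn]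

lemma TL_ne_nil : TL n ≠ [] := by
  unfold TL
  simp

lemma not_last_member (hn : 3 ≤ n) {p : ℝ × ℝ} (hp : p ∈ TL n)
    (hne : (TL n).getLast? ≠ some p) : ∃ v ∈ VTs n, p = pairOf n v := by
  rcases mem_TL.mp hp with h | rfl
  · exact h
  · exact absurd TL_getLast hne

end TemplateCon

theorem exists_template (n : ℕ) (hn : 3 ≤ n) :
    ∃ T : List (ℝ × ℝ), T ≠ [] ∧
      (∀ p ∈ T, p.1 < p.2 ∧ 0 < p.1 ∧ p.2 < (n : ℝ)) ∧
      T.Chain' (fun p q => p.2 < q.1) ∧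
      (∃ plast ∈ T.getLast?, Set.Icc plast.1 plast.2 ⊆ Set.Ioo ((n : ℝ) - 1) (n : ℝ)) ∧
      (∀ p ∈ T, Set.Icc p.1 p.2 ⊆ Set.Ioo ((n : ℝ) - 1) (n : ℝ) → T.getLast? = some p) ∧
      (∃ p0 ∈ T.head?, Set.Icc p0.1 p0.2 ⊆ Set.Ioo (0 : ℝ) 1) ∧
      (∀ p ∈ T, Set.Icc p.1 p.2 ⊆ Set.Ioo (0 : ℝ) 1 → T.head? = some p) ∧
      (∀ p ∈ T, T.getLast? ≠ some p →
        ∃ q ∈ T, Set.Icc p.1 p.2 ⊆ (fun x => (1 - 1 / (n : ℝ)) * x) '' Set.Icc q.1 q.2) ∧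
      (∀ p ∈ T, T.getLast? ≠ some p →
        ∃ q ∈ T, Set.Icc p.1 p.2 ⊆ (fun x => x - 1) '' Set.Icc q.1 q.2) := by
  refine ⟨TemplateCon.TL n, TemplateCon.TL_ne_nil, TemplateCon.TL_bounds hn,
    TemplateCon.TL_chain hn,
    ⟨(TemplateCon.alp n, TemplateCon.bet n), TemplateCon.TL_getLast,
      TemplateCon.top_in_win hn⟩,
    TemplateCon.last_unique hn,
    ⟨TemplateCon.pairOf n (TemplateCon.hpt n), TemplateCon.TL_head hn,
      TemplateCon.head_in_01 hn⟩,
    TemplateCon.head_unique hn, ?_, ?_⟩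
  · intro p hp hne
    obtain ⟨v, hv, rfl⟩ := TemplateCon.not_last_member hn hp hne
    exact TemplateCon.cover_f hn hv
  · intro p hp hne
    obtain ⟨v, hv, rfl⟩ := TemplateCon.not_last_member hn hp hne
    exact TemplateCon.cover_g hn hv
end
end

section
/- Let K and L be regions (finite disjoint unions of closed intervals with nonempty interior) contained in the open interval (0,1), and let ε > 0. Then there exists a finite sequence of regions M₀ = K, M₁, …, M_{i₀} = L in (0,1) such that consecutive regions M_i and M_{i+1} are ε-equivalent: there exist orientation-preserving PL-homeomorphisms φ, ψ of [0,1] with μ(φ) < ε, μ(ψ) < ε, φ(M_i) ⊇ M_{i+1}, and ψ(M_{i+1}) ⊇ M_i. -/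
/-- `μ(f) < ε` for a piecewise linear map on `[0,1]`: away from a finite set of
corners the slope is within `ε` of `1`. -/
def MuLt (f : ℝ → ℝ) (ε : ℝ) : Prop :=
  ∃ s : Finset ℝ, ∀ x ∈ Set.Icc (0:ℝ) 1, x ∉ (s : Set ℝ) →
    ∃ d : ℝ, HasDerivAt f d x ∧ |d - 1| < ε

/-- An orientation-preserving PL homeomorphism of `[0,1]` with `μ < ε`. -/
def IsPLHomeoMuLt (φ : ℝ → ℝ) (ε : ℝ) : Prop :=
  Set.BijOn φ (Set.Icc (0:ℝ) 1) (Set.Icc (0:ℝ) 1) ∧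
  StrictMonoOn φ (Set.Icc (0:ℝ) 1) ∧ MuLt φ ε

/-- Two regions `K`, `L` contained in `(0,1)` are `ε`-equivalent. -/
def EpsEquiv (ε : ℝ) (K L : Set ℝ) : Prop :=
  ∃ φ ψ : ℝ → ℝ, IsPLHomeoMuLt φ ε ∧ IsPLHomeoMuLt ψ ε ∧
    φ '' K ⊆ L ∧ ψ '' L ⊆ K

set_option linter.unusedSectionVars false
set_option linter.unusedVariables false
set_option maxHeartbeats 1000000

/-! ### Chain infrastructure -/

def Good (X : Set ℝ) : Prop := IsRegion X ∧ X ⊆ Set.Ioo (0:ℝ) 1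

def Chain (ε : ℝ) (K L : Set ℝ) : Prop :=
  ∃ i₀ : ℕ, ∃ M : ℕ → Set ℝ, M 0 = K ∧ M i₀ = L ∧
    (∀ i ≤ i₀, IsRegion (M i) ∧ M i ⊆ Set.Ioo (0:ℝ) 1) ∧
    (∀ i < i₀, EpsEquiv ε (M i) (M (i + 1)))

lemma chain_refl {ε : ℝ} {K : Set ℝ} (h : Good K) : Chain ε K K := by
  exact ⟨0, fun _ => K, rfl, rfl, fun i _ => ⟨h.1, h.2⟩, fun i hi => by omega⟩

lemma epsEquiv_symm {ε : ℝ} {K L : Set ℝ} (h : EpsEquiv ε K L) : EpsEquiv ε L K := by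
  obtain ⟨φ, ψ, h1, h2, h3, h4⟩ := h
  exact ⟨ψ, φ, h2, h1, h4, h3⟩

lemma chain_single {ε : ℝ} {K L : Set ℝ} (h : EpsEquiv ε K L) (hK : Good K) (hL : Good L) :
    Chain ε K L := by
  refine ⟨1, fun i => if i = 0 then K else L, by simp, by simp, ?_, ?_⟩
  · intro i hi
    by_cases h0 : i = 0 <;> simp [h0, hK.1, hK.2, hL.1, hL.2]
  · intro i hi
    have : i = 0 := by omega
    simpa [this] using h

lemma chain_symm {ε : ℝ} {K L : Set ℝ} (h : Chain ε K L) : Chain ε L K := by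
  obtain ⟨i₀, M, h0, h1, h2, h3⟩ := h
  refine ⟨i₀, fun i => M (i₀ - i), by simpa, by simpa, ?_, ?_⟩
  · intro i hi; exact h2 _ (by omega)
  · intro i hi
    have e1 : i₀ - i = (i₀ - (i+1)) + 1 := by omega
    simp only []
    rw [e1]
    exact epsEquiv_symm (h3 _ (by omega))

lemma chain_trans {ε : ℝ} {K L N : Set ℝ} (h : Chain ε K L) (h' : Chain ε L N) :
    Chain ε K N := by
  obtain ⟨i₀, M, h0, h1, h2, h3⟩ := h
  obtain ⟨j₀, M', g0, g1, g2, g3⟩ := h'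
  refine ⟨i₀ + j₀, fun i => if i ≤ i₀ then M i else M' (i - i₀), by simp [h0], ?_, ?_, ?_⟩
  · by_cases hj : j₀ = 0
    · simp only [hj, Nat.add_zero, if_pos le_rfl, h1, ← g0]
      rw [← hj, g1]
    · simp only [if_neg (by omega : ¬ i₀ + j₀ ≤ i₀)]
      simpa using g1
  · intro i hi
    by_cases hii : i ≤ i₀
    · simpa [hii] using h2 i hii
    · simpa [hii] using g2 (i - i₀) (by omega)
  · intro i hi
    by_cases hii : i + 1 ≤ i₀
    · have hle : i ≤ i₀ := by omega
      simp only [hii, hle, if_pos, if_true]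
      simpa [hii, hle] using h3 i (by omega)
    · by_cases he : i = i₀
      · have : M i = M' (i - i₀) := by simp [he, h1, g0]
        simp only [if_pos (by omega : i ≤ i₀), if_neg (by omega : ¬ i + 1 ≤ i₀)]
        rw [he, h1, ← g0]
        have := g3 0 (by omega)
        simpa [show i₀ + 1 - i₀ = 1 by omega] using this
      · simp only [if_neg (by omega : ¬ i ≤ i₀), if_neg (by omega : ¬ i + 1 ≤ i₀)]
        have := g3 (i - i₀) (by omega)
        simpa [show i + 1 - i₀ = (i - i₀) + 1 by omega] using this

set_option linter.unusedSectionVars false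
/-! ### The basic bump homeomorphism -/

noncomputable def bump (u v w t x : ℝ) : ℝ :=
  if x ≤ u then x else if v ≤ x then x
  else if x ≤ w then u + (t - u) / (w - u) * (x - u)
  else v + (t - v) / (w - v) * (x - v)

section bump

variable {u v w t : ℝ} (huw : u < w) (hwv : w < v) (hut : u < t) (htv : t < v)

lemma bump_of_le {x : ℝ} (h : x ≤ u) : bump u v w t x = x := if_pos h

lemma bump_of_ge {x : ℝ} (huv : u < v) (h : v ≤ x) : bump u v w t x = x := by
  rw [bump, if_neg (by linarith), if_pos h]

include hwv in
lemma bump_mid1 {x : ℝ} (h1 : u < x) (h2 : x ≤ w) :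
    bump u v w t x = u + (t - u) / (w - u) * (x - u) := by
  rw [bump, if_neg (by linarith), if_neg (by push_neg; linarith), if_pos h2]

include huw in
lemma bump_mid2 {x : ℝ} (h1 : w < x) (h2 : x < v) :
    bump u v w t x = v + (t - v) / (w - v) * (x - v) := by
  rw [bump, if_neg (by linarith), if_neg (by push_neg; linarith), if_neg (by push_neg; linarith)]

include huw hwv hut in
lemma bump_w : bump u v w t w = t := by
  rw [bump_mid1 hwv huw le_rfl]
  have h0 : w - u ≠ 0 := by linarith
  field_simp
  ring

include huw hwv hut in
lemma bump_mid1_bounds {x : ℝ} (h1 : u < x) (h2 : x ≤ w) :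
    u < bump u v w t x ∧ bump u v w t x ≤ t := by
  rw [bump_mid1 hwv h1 h2]
  have h0 : w - u ≠ 0 := by linarith
  have ha : 0 < (t - u) / (w - u) := div_pos (by linarith) (by linarith)
  constructor
  · nlinarith
  · have : (t - u) / (w - u) * (x - u) ≤ (t - u) / (w - u) * (w - u) := by nlinarith
    have e : (t - u) / (w - u) * (w - u) = t - u := by field_simp
    linarith [e ▸ this]

omit hwv in
include huw hwv htv in
lemma bump_mid2_bounds {x : ℝ} (h1 : w < x) (h2 : x < v) :
    t < bump u v w t x ∧ bump u v w t x < v := by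
  rw [bump_mid2 huw h1 h2]
  have h0 : w - v ≠ 0 := by linarith
  have ha : 0 < (t - v) / (w - v) := div_pos_of_neg_of_neg (by linarith) (by linarith)
  constructor
  · have e : (t - v) / (w - v) * (w - v) = t - v := by field_simp
    nlinarith
  · nlinarith

include huw hwv hut htv in
lemma bump_strictMono : StrictMono (bump u v w t) := by
  intro x y hxy
  rcases le_or_gt x u with hx1 | hx1
  · rw [bump_of_le hx1]
    rcases le_or_gt y u with hy1 | hy1
    · rw [bump_of_le hy1]; exact hxy
    · rcases le_or_gt y w with hy2 | hy2
      · linarith [(bump_mid1_bounds (t := t) huw hwv hut hy1 hy2).1]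
      · rcases lt_or_ge y v with hy3 | hy3
        · linarith [(bump_mid2_bounds (t := t) huw hwv htv hy2 hy3).1]
        · rw [bump_of_ge (by linarith) hy3]; linarith
  · rcases le_or_gt x w with hx2 | hx2
    · rcases le_or_gt y w with hy2 | hy2
      · rw [bump_mid1 hwv hx1 hx2, bump_mid1 hwv (by linarith : u < y) hy2]
        have ha : 0 < (t - u) / (w - u) := div_pos (by linarith) (by linarith)
        nlinarith
      · rcases lt_or_ge y v with hy3 | hy3
        · linarith [(bump_mid1_bounds (t := t) huw hwv hut hx1 hx2).2,
            (bump_mid2_bounds (t := t) huw hwv htv hy2 hy3).1]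
        · rw [bump_of_ge (by linarith) hy3]
          linarith [(bump_mid1_bounds (t := t) huw hwv hut hx1 hx2).2]
    · rcases lt_or_ge x v with hx3 | hx3
      · rcases lt_or_ge y v with hy3 | hy3
        · rw [bump_mid2 huw hx2 hx3, bump_mid2 huw (by linarith : w < y) hy3]
          have ha : 0 < (t - v) / (w - v) := div_pos_of_neg_of_neg (by linarith) (by linarith)
          nlinarith
        · rw [bump_of_ge (by linarith) hy3]
          linarith [(bump_mid2_bounds (t := t) huw hwv htv hx2 hx3).2]
      · rw [bump_of_ge (by linarith) hx3, bump_of_ge (by linarith) (by linarith)]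
        exact hxy

include huw hwv hut htv in
lemma bump_bump (y : ℝ) : bump u v w t (bump u v t w y) = y := by
  rcases le_or_gt y u with hy1 | hy1
  · rw [bump_of_le hy1, bump_of_le hy1]
  rcases le_or_gt v y with hy4 | hy4
  · rw [bump_of_ge (by linarith) hy4, bump_of_ge (by linarith) hy4]
  rcases le_or_gt y t with hy2 | hy2
  · obtain ⟨b1, b2⟩ := bump_mid1_bounds (t := w) hut htv huw hy1 hy2
    rw [bump_mid1 hwv b1 b2, bump_mid1 htv hy1 hy2]
    have h0 : w - u ≠ 0 := by linarith
    have h0' : t - u ≠ 0 := by linarith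
    field_simp
    ring
  · obtain ⟨b1, b2⟩ := bump_mid2_bounds (t := w) hut htv hwv hy2 hy4
    rw [bump_mid2 huw b1 b2, bump_mid2 hut hy2 hy4]
    have h1 : w - v ≠ 0 := by linarith
    have h2 : t - v ≠ 0 := by linarith
    field_simp
    ring

variable (hu : 0 ≤ u) (hv : v ≤ 1)

include huw hwv hut htv hu hv in
lemma bump_mapsTo : Set.MapsTo (bump u v w t) (Set.Icc 0 1) (Set.Icc 0 1) := by
  intro x hx
  have h0 : bump u v w t 0 = 0 := bump_of_le hu
  have h1 : bump u v w t 1 = 1 := bump_of_ge (by linarith) hv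
  constructor
  · rw [← h0]; exact (bump_strictMono huw hwv hut htv).monotone hx.1
  · rw [← h1]; exact (bump_strictMono huw hwv hut htv).monotone hx.2

include huw hwv hut htv hu hv in
lemma bump_plhomeo {ε : ℝ} (hε : 0 < ε)
    (h1 : |t - w| < ε * (w - u)) (h2 : |t - w| < ε * (v - w)) :
    IsPLHomeoMuLt (bump u v w t) ε := by
  refine ⟨⟨bump_mapsTo huw hwv hut htv hu hv, ?_, ?_⟩, ?_, ?_⟩
  · exact fun a _ b _ hab => (bump_strictMono huw hwv hut htv).injective hab
  · intro y hy
    refine ⟨bump u v t w y, bump_mapsTo hut htv huw hwv hu hv hy, ?_⟩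
    exact bump_bump huw hwv hut htv y
  · exact fun a ha b hb hab => bump_strictMono huw hwv hut htv hab
  · refine ⟨{u, w, v}, ?_⟩
    intro x hx hxs
    simp only [Finset.coe_insert, Set.mem_insert_iff, Finset.coe_singleton,
      Set.mem_singleton_iff, not_or] at hxs
    obtain ⟨hxu, hxw, hxv⟩ := hxs
    rcases lt_or_gt_of_ne hxu with h | h
    · refine ⟨1, ?_, by simpa using hε⟩
      refine (hasDerivAt_id x).congr_of_eventuallyEq ?_
      filter_upwards [Iio_mem_nhds h] with z hz
      exact bump_of_le (le_of_lt hz)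
    rcases lt_or_gt_of_ne hxv with h' | h'
    · rcases lt_or_gt_of_ne hxw with hw' | hw'
      · refine ⟨(t - u) / (w - u), ?_, ?_⟩
        · have hd : HasDerivAt (fun z => u + (t - u) / (w - u) * (z - u))
              ((t - u) / (w - u)) x := by
            simpa using (((hasDerivAt_id x).sub_const u).const_mul ((t - u) / (w - u))).const_add u
          refine hd.congr_of_eventuallyEq ?_
          filter_upwards [Ioo_mem_nhds h hw'] with z hz
          exact bump_mid1 hwv hz.1 (le_of_lt hz.2)
        · have h0 : w - u ≠ 0 := by linarith
          have e : (t - u) / (w - u) - 1 = (t - w) / (w - u) := by field_simp; ring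
          rw [e, abs_div, abs_of_pos (by linarith : (0:ℝ) < w - u)]
          rw [div_lt_iff₀ (by linarith)]
          linarith [h1]
      · refine ⟨(t - v) / (w - v), ?_, ?_⟩
        · have hd : HasDerivAt (fun z => v + (t - v) / (w - v) * (z - v))
              ((t - v) / (w - v)) x := by
            simpa using (((hasDerivAt_id x).sub_const v).const_mul ((t - v) / (w - v))).const_add v
          refine hd.congr_of_eventuallyEq ?_
          filter_upwards [Ioo_mem_nhds hw' h'] with z hz
          exact bump_mid2 huw hz.1 hz.2
        · have h0 : w - v ≠ 0 := by linarith
          have e : (t - v) / (w - v) - 1 = (t - w) / (w - v) := by field_simp; ring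
          rw [e, abs_div, abs_of_neg (by linarith : w - v < (0:ℝ))]
          rw [div_lt_iff₀ (by linarith)]
          have : -(w - v) = v - w := by ring
          rw [this]
          linarith [h2]
    · refine ⟨1, ?_, by simpa using hε⟩
      refine (hasDerivAt_id x).congr_of_eventuallyEq ?_
      filter_upwards [Ioi_mem_nhds h'] with z hz
      exact bump_of_ge (by linarith) (le_of_lt hz)

end bump

lemma mono_image_Icc {f : ℝ → ℝ} (hf : Monotone f) (a b : ℝ) :
    f '' Set.Icc a b ⊆ Set.Icc (f a) (f b) := by
  rintro y ⟨x, hx, rfl⟩; exact ⟨hf hx.1, hf hx.2⟩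

/-! ### Regions from endpoint vectors -/

def SortedIn (n : ℕ) (e : ℕ → ℝ) : Prop :=
  (∀ i, i < n → e i ∈ Set.Ioo (0:ℝ) 1) ∧ (∀ i, i + 1 < n → e i < e (i + 1))

lemma SortedIn.mono {n : ℕ} {e : ℕ → ℝ} (h : SortedIn n e) :
    ∀ i j, i < j → j < n → e i < e j := by
  intro i j hij hj
  induction j with
  | zero => omega
  | succ j ih =>
    rcases Nat.lt_or_ge i j with hij' | hij'
    · exact lt_trans (ih hij' (by omega)) (h.2 j (by omega))
    · have : i = j := by omega
      subst this
      exact h.2 i (by omega)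

def regionOf (r : ℕ) (e : ℕ → ℝ) : Set ℝ :=
  ⋃ j ∈ Finset.range r, Set.Icc (e (2 * j)) (e (2 * j + 1))

lemma comp_subset_regionOf {r j : ℕ} {e : ℕ → ℝ} (hj : j < r) :
    Set.Icc (e (2 * j)) (e (2 * j + 1)) ⊆ regionOf r e := by
  intro x hx
  exact Set.mem_biUnion (Finset.mem_range.2 hj) hx

lemma regionOf_congr {r : ℕ} {e e' : ℕ → ℝ} (h : ∀ i, i < 2 * r → e i = e' i) :
    regionOf r e = regionOf r e' := by
  unfold regionOf
  apply Set.iUnion₂_congr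
  intro j hj
  have hj' := Finset.mem_range.1 hj
  rw [h (2 * j) (by omega), h (2 * j + 1) (by omega)]

lemma disjoint_Icc_of_lt {a b c d : ℝ} (h : b < c) :
    Disjoint (Set.Icc a b) (Set.Icc c d) := by
  rw [Set.disjoint_left]
  rintro x ⟨_, hxb⟩ ⟨hcx, _⟩
  linarith

lemma regionOf_good {r : ℕ} {e : ℕ → ℝ} (hr : 1 ≤ r) (he : SortedIn (2 * r) e) :
    Good (regionOf r e) := by
  constructor
  · refine ⟨(Finset.range r).image (fun j => (e (2 * j), e (2 * j + 1))), ?_, ?_, ?_, ?_⟩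
    · exact (Finset.nonempty_range_iff.2 (by omega)).image _
    · intro p hp
      obtain ⟨j, hj, rfl⟩ := Finset.mem_image.1 hp
      exact he.2 (2 * j) (by simp at hj; omega)
    · intro p hp q hq hpq
      obtain ⟨j, hj, rfl⟩ := Finset.mem_image.1 hp
      obtain ⟨k, hk, rfl⟩ := Finset.mem_image.1 hq
      simp only [Finset.mem_range] at hj hk
      have hjk : j ≠ k := by rintro rfl; exact hpq rfl
      rcases Nat.lt_or_ge j k with h | h
      · exact disjoint_Icc_of_lt (he.mono (2 * j + 1) (2 * k) (by omega) (by omega))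
      · exact (disjoint_Icc_of_lt (he.mono (2 * k + 1) (2 * j) (by omega) (by omega))).symm
    · ext x
      simp only [regionOf, Set.mem_iUnion, Finset.mem_image, Finset.mem_range,
        exists_prop, Set.mem_Icc]
      constructor
      · rintro ⟨j, hj, hx⟩
        exact ⟨(e (2 * j), e (2 * j + 1)), ⟨j, hj, rfl⟩, hx⟩
      · rintro ⟨p, ⟨j, hj, rfl⟩, hx⟩
        exact ⟨j, hj, hx⟩
  · intro x hx
    simp only [regionOf, Set.mem_iUnion, Finset.mem_range, exists_prop] at hx
    obtain ⟨j, hj, hx1, hx2⟩ := hx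
    have b1 := (he.1 (2 * j) (by omega)).1
    have b2 := (he.1 (2 * j + 1) (by omega)).2
    exact ⟨by linarith, by linarith⟩

/-! ### Moving one endpoint -/

lemma onestep {ε : ℝ} (hε : 0 < ε) {r : ℕ} (hr : 1 ≤ r) {e : ℕ → ℝ}
    (he : SortedIn (2 * r) e) {j : ℕ} (hj : j < 2 * r) {t lo hi : ℝ}
    (hlo : lo = if j = 0 then 0 else e (j - 1))
    (hhi : hi = if j + 1 = 2 * r then 1 else e (j + 1))
    (h1 : lo < t) (h2 : t < hi)
    (c1 : |t - e j| < ε * (e j - lo)) (c2 : |t - e j| < ε * (hi - e j))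
    (c3 : |t - e j| < ε * (t - lo)) (c4 : |t - e j| < ε * (hi - t)) :
    EpsEquiv ε (regionOf r e) (regionOf r (Function.update e j t)) ∧
      SortedIn (2 * r) (Function.update e j t) := by
  have hlo0 : 0 ≤ lo := by
    rw [hlo]; split
    · exact le_rfl
    · exact le_of_lt (he.1 (j - 1) (by omega)).1
  have hlow : lo < e j := by
    rw [hlo]; split
    · next h => exact h ▸ (he.1 j hj).1
    · next h =>
        have h2' : j - 1 + 1 = j := by omega
        have h3' := he.2 (j - 1) (by omega)
        rw [h2'] at h3'
        exact h3'
  have hwhi : e j < hi := by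
    rw [hhi]; split
    · exact (he.1 j hj).2
    · next h => exact he.2 j (by omega)
  have hhi1 : hi ≤ 1 := by
    rw [hhi]; split
    · exact le_rfl
    · exact le_of_lt (he.1 (j + 1) (by omega)).2
  -- values are fixed away from j
  have hfix_lo : ∀ i, i < j → e i ≤ lo := by
    intro i hij
    rw [hlo, if_neg (by omega)]
    rcases Nat.lt_or_ge i (j - 1) with h | h
    · exact le_of_lt (he.mono i (j - 1) h (by omega))
    · have : i = j - 1 := by omega
      rw [this]
  have hfix_hi : ∀ i, j < i → i < 2 * r → hi ≤ e i := by
    intro i hij hi2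
    rw [hhi, if_neg (by omega)]
    rcases Nat.lt_or_ge (j + 1) i with h | h
    · exact le_of_lt (he.mono (j + 1) i h hi2)
    · have : i = j + 1 := by omega
      rw [this]
  set e' := Function.update e j t with he'def
  have he'i : ∀ i, e' i = if i = j then t else e i := fun i => Function.update_apply e j t i
  have habs : |e j - t| = |t - e j| := abs_sub_comm _ _
  have hφ := bump_plhomeo (u := lo) (v := hi) (w := e j) (t := t)
    hlow hwhi h1 h2 hlo0 hhi1 hε c1 c2
  have hψ := bump_plhomeo (u := lo) (v := hi) (w := t) (t := e j)
    h1 h2 hlow hwhi hlo0 hhi1 hε (habs ▸ c3) (habs ▸ c4)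
  have hφval : ∀ i, i < 2 * r → bump lo hi (e j) t (e i) = e' i := by
    intro i hi2
    rcases lt_trichotomy i j with h | h | h
    · rw [bump_of_le (hfix_lo i h), he'i, if_neg (by omega)]
    · rw [h, bump_w hlow hwhi h1, he'i, if_pos rfl]
    · rw [bump_of_ge (by linarith) (hfix_hi i h hi2), he'i, if_neg (by omega)]
  have hψval : ∀ i, i < 2 * r → bump lo hi t (e j) (e' i) = e i := by
    intro i hi2
    rcases lt_trichotomy i j with h | h | h
    · rw [he'i, if_neg (by omega), bump_of_le (hfix_lo i h)]
    · rw [he'i, if_pos h, h, bump_w h1 h2 hlow]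
    · rw [he'i, if_neg (by omega), bump_of_ge (by linarith) (hfix_hi i h hi2)]
  have hsorted' : SortedIn (2 * r) e' := by
    constructor
    · intro i hi2
      rw [he'i]
      split
      · exact ⟨by linarith, by linarith⟩
      · exact he.1 i hi2
    · intro i hi2
      rw [he'i, he'i]
      rcases lt_trichotomy i j with h | h | h
      · rw [if_neg (by omega)]
        split
        · next hh =>
          have : i = j - 1 := by omega
          rw [this]
          calc e (j-1) ≤ lo := hfix_lo (j-1) (by omega)
            _ < t := h1
        · exact he.2 i hi2
      · rw [if_pos h, if_neg (by omega)]
        calc t < hi := h2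
          _ ≤ e (i+1) := hfix_hi (i+1) (by omega) hi2
      · rw [if_neg (by omega), if_neg (by omega)]
        exact he.2 i hi2
  refine ⟨⟨bump lo hi (e j) t, bump lo hi t (e j), hφ, hψ, ?_, ?_⟩, hsorted'⟩
  · unfold regionOf
    rw [Set.image_iUnion₂]
    apply Set.iUnion₂_subset
    intro j' hj'
    have hj'' := Finset.mem_range.1 hj'
    refine subset_trans (mono_image_Icc (bump_strictMono hlow hwhi h1 h2).monotone _ _) ?_
    rw [hφval (2 * j') (by omega), hφval (2 * j' + 1) (by omega)]
    exact comp_subset_regionOf hj''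
  · unfold regionOf
    rw [Set.image_iUnion₂]
    apply Set.iUnion₂_subset
    intro j' hj'
    have hj'' := Finset.mem_range.1 hj'
    refine subset_trans (mono_image_Icc (bump_strictMono h1 h2 hlow hwhi).monotone _ _) ?_
    rw [hψval (2 * j') (by omega), hψval (2 * j' + 1) (by omega)]
    exact comp_subset_regionOf hj''

/-! ### Gap control -/

def GapsIn (n : ℕ) (γ : ℝ) (e : ℕ → ℝ) : Prop :=
  γ ≤ e 0 ∧ e (n - 1) ≤ 1 - γ ∧ ∀ i, i + 1 < n → γ ≤ e (i + 1) - e i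

lemma mono_of_adj {n : ℕ} {e : ℕ → ℝ} (h : ∀ i, i + 1 < n → e i < e (i + 1)) :
    ∀ i j, i ≤ j → j < n → e i ≤ e j := by
  intro i j hij hj
  induction j with
  | zero => have : i = 0 := by omega
            rw [this]
  | succ j ih =>
    rcases Nat.lt_or_ge i (j + 1) with h' | h'
    · exact le_trans (ih (by omega) (by omega)) (le_of_lt (h j (by omega)))
    · have : i = j + 1 := by omega
      rw [this]

lemma sortedIn_of_gaps {n : ℕ} {γ : ℝ} {e : ℕ → ℝ} (hn : 1 ≤ n) (hγ : 0 < γ)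
    (h : GapsIn n γ e) : SortedIn n e := by
  have hadj : ∀ i, i + 1 < n → e i < e (i + 1) := by
    intro i hi
    have := h.2.2 i hi
    linarith
  refine ⟨?_, hadj⟩
  intro i hi
  have l1 : e 0 ≤ e i := mono_of_adj hadj 0 i (by omega) hi
  have l2 : e i ≤ e (n - 1) := mono_of_adj hadj i (n - 1) (by omega) (by omega)
  constructor
  · linarith [h.1]
  · linarith [h.2.1]

lemma gapsIn_mono {n : ℕ} {γ γ' : ℝ} {e : ℕ → ℝ} (h : γ' ≤ γ) (hg : GapsIn n γ e) :
    GapsIn n γ' e :=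
  ⟨by linarith [hg.1], by linarith [hg.2.1], fun i hi => by linarith [hg.2.2 i hi]⟩

lemma exists_gaps {r : ℕ} (hr : 1 ≤ r) {e : ℕ → ℝ} (he : SortedIn (2 * r) e) :
    ∃ γ : ℝ, 0 < γ ∧ GapsIn (2 * r) γ e := by
  have hne : (Finset.range (2 * r - 1)).Nonempty := ⟨0, by simp; omega⟩
  set γ₁ := (Finset.range (2 * r - 1)).inf' hne (fun i => e (i + 1) - e i) with hγ₁
  refine ⟨min (e 0) (min (1 - e (2 * r - 1)) γ₁), ?_, ?_, ?_, ?_⟩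
  · have h1 : 0 < e 0 := (he.1 0 (by omega)).1
    have h2 : 0 < 1 - e (2 * r - 1) := by linarith [(he.1 (2 * r - 1) (by omega)).2]
    have h3 : 0 < γ₁ := by
      rw [hγ₁, Finset.lt_inf'_iff]
      intro i hi
      have := he.2 i (by simp at hi; omega)
      linarith
    simp only [lt_min_iff]
    exact ⟨h1, h2, h3⟩
  · exact min_le_left _ _
  · have : min (e 0) (min (1 - e (2*r-1)) γ₁) ≤ 1 - e (2*r-1) := min_le_of_right_le (min_le_left (1 - e (2*r-1)) γ₁)
    linarith [this]
  · intro i hi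
    have h4 : γ₁ ≤ e (i + 1) - e i := Finset.inf'_le _ (by simp; omega)
    have : min (e 0) (min (1 - e (2*r-1)) γ₁) ≤ γ₁ := min_le_of_right_le (min_le_right (1 - e (2*r-1)) γ₁)
    linarith [this]

/-! ### One interpolation round -/

def mixv (m e : ℕ → ℝ) (k : ℕ) : ℕ → ℝ := fun j => if j < k then m j else e j

lemma move_round {ε γ β : ℝ} (hε : 0 < ε) {r : ℕ} (hr : 1 ≤ r) {e m : ℕ → ℝ}
    (hγ : 0 < γ) (hβ0 : 0 ≤ β) (hβ1 : β ≤ γ / 4) (hβ2 : β < ε * (γ - β))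
    (hGe : GapsIn (2 * r) γ e) (hGm : GapsIn (2 * r) γ m)
    (hd : ∀ j, j < 2 * r → |m j - e j| ≤ β) :
    Chain ε (regionOf r e) (regionOf r m) := by
  have hγβ : 0 < γ - β := by linarith
  -- gaps of mixed vectors
  have hGmix : ∀ k, GapsIn (2 * r) (γ - β) (mixv m e k) := by
    intro k
    refine ⟨?_, ?_, ?_⟩
    · simp only [mixv]
      split
      · linarith [hGm.1]
      · linarith [hGe.1]
    · simp only [mixv]
      split
      · linarith [hGm.2.1]
      · linarith [hGe.2.1]
    · intro i hi
      simp only [mixv]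
      rcases Nat.lt_or_ge (i + 1) k with h1 | h1
      · rw [if_pos h1, if_pos (by omega)]
        linarith [hGm.2.2 i hi]
      · rcases Nat.lt_or_ge i k with h2 | h2
        · rw [if_neg (by omega), if_pos h2]
          have := hd i (by omega)
          have habs := abs_le.1 this
          linarith [hGe.2.2 i hi, habs.1, habs.2]
        · rw [if_neg (by omega), if_neg (by omega)]
          linarith [hGe.2.2 i hi]
  have hsmix : ∀ k, SortedIn (2 * r) (mixv m e k) :=
    fun k => sortedIn_of_gaps (by omega) hγβ (hGmix k)
  -- induction over coordinates
  have main : ∀ k, k ≤ 2 * r → Chain ε (regionOf r e) (regionOf r (mixv m e k)) := by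
    intro k
    induction k with
    | zero =>
      intro _
      have heq : regionOf r (mixv m e 0) = regionOf r e :=
        regionOf_congr (fun i _ => by simp [mixv])
      rw [heq]
      exact chain_refl (regionOf_good hr (sortedIn_of_gaps (by omega) hγ hGe))
    | succ k ih =>
      intro hk
      have hk' : k < 2 * r := by omega
      have hcur := hsmix k
      -- one step
      have hmixk : mixv m e k k = e k := by simp [mixv]
      have hlo_lt : (if k = 0 then (0:ℝ) else mixv m e k (k - 1)) < m k := by
        split
        · linarith [hGm.1, mono_of_adj (e := m) (n := 2 * r) (fun i hi => by linarith [hGm.2.2 i hi]) 0 k (by omega) hk']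
        · next h =>
          have : mixv m e k (k - 1) = m (k - 1) := by simp only [mixv, if_pos (by omega : k - 1 < k)]
          rw [this]
          have h2' := hGm.2.2 (k - 1) (by omega)
          have h3' : k - 1 + 1 = k := by omega
          rw [h3'] at h2'
          linarith
      have hhi_gt : m k < (if k + 1 = 2 * r then (1:ℝ) else mixv m e k (k + 1)) := by
        split
        · next h =>
          have : k = 2 * r - 1 := by omega
          rw [this]
          linarith [hGm.2.1]
        · next h =>
          have : mixv m e k (k + 1) = e (k + 1) := by simp only [mixv, if_neg (by omega : ¬ k + 1 < k)]
          rw [this]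
          have habs := abs_le.1 (hd k hk')
          linarith [hGe.2.2 k (by omega), habs.1, habs.2]
      -- all four denominators are ≥ γ - β
      have hq1 : γ - β ≤ e k - (if k = 0 then (0:ℝ) else mixv m e k (k - 1)) := by
        split
        · have : γ ≤ e 0 := hGe.1
          have := mono_of_adj (e := e) (n := 2 * r) (fun i hi => by linarith [hGe.2.2 i hi]) 0 k (by omega) hk'
          linarith
        · next h =>
          have hmv : mixv m e k (k - 1) = m (k - 1) := by simp only [mixv, if_pos (by omega : k - 1 < k)]
          rw [hmv]
          have h2' := hGe.2.2 (k - 1) (by omega)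
          have h3' : k - 1 + 1 = k := by omega
          rw [h3'] at h2'
          have habs := abs_le.1 (hd (k - 1) (by omega))
          linarith [habs.1, habs.2]
      have hq3 : γ - β ≤ m k - (if k = 0 then (0:ℝ) else mixv m e k (k - 1)) := by
        split
        · have : γ ≤ m 0 := hGm.1
          have := mono_of_adj (e := m) (n := 2 * r) (fun i hi => by linarith [hGm.2.2 i hi]) 0 k (by omega) hk'
          linarith
        · next h =>
          have hmv : mixv m e k (k - 1) = m (k - 1) := by simp only [mixv, if_pos (by omega : k - 1 < k)]
          rw [hmv]
          have h2' := hGm.2.2 (k - 1) (by omega)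
          have h3' : k - 1 + 1 = k := by omega
          rw [h3'] at h2'
          linarith
      have hq2 : γ - β ≤ (if k + 1 = 2 * r then (1:ℝ) else mixv m e k (k + 1)) - e k := by
        split
        · next h =>
          have hh : k = 2 * r - 1 := by omega
          rw [hh]
          linarith [hGe.2.1]
        · next h =>
          have hmv : mixv m e k (k + 1) = e (k + 1) := by simp only [mixv, if_neg (by omega : ¬ k + 1 < k)]
          rw [hmv]
          linarith [hGe.2.2 k (by omega)]
      have hq4 : γ - β ≤ (if k + 1 = 2 * r then (1:ℝ) else mixv m e k (k + 1)) - m k := by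
        split
        · next h =>
          have hh : k = 2 * r - 1 := by omega
          rw [hh]
          linarith [hGm.2.1]
        · next h =>
          have hmv : mixv m e k (k + 1) = e (k + 1) := by simp only [mixv, if_neg (by omega : ¬ k + 1 < k)]
          rw [hmv]
          have habs := abs_le.1 (hd k hk')
          linarith [hGe.2.2 k (by omega), habs.1, habs.2]
      have hdk : |m k - mixv m e k k| ≤ β := by rw [hmixk]; exact hd k hk'
      have hsmall : ∀ q : ℝ, γ - β ≤ q → |m k - mixv m e k k| < ε * q := by
        intro q hq
        have : ε * (γ - β) ≤ ε * q := by
          apply mul_le_mul_of_nonneg_left hq (le_of_lt hε)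
        linarith [hdk]
      have hstep := onestep hε hr hcur hk' (t := m k)
        (lo := if k = 0 then (0:ℝ) else mixv m e k (k - 1))
        (hi := if k + 1 = 2 * r then (1:ℝ) else mixv m e k (k + 1))
        rfl rfl hlo_lt hhi_gt
        (by rw [← hmixk] at hq1; exact hsmall _ hq1)
        (by rw [← hmixk] at hq2; exact hsmall _ hq2)
        (hsmall _ hq3) (hsmall _ hq4)
      have hupd : Function.update (mixv m e k) k (m k) = mixv m e (k + 1) := by
        funext j
        rw [Function.update_apply]
        simp only [mixv]
        rcases lt_trichotomy j k with h | h | h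
        · rw [if_neg (by omega), if_pos h, if_pos (by omega)]
        · rw [if_pos h, h, if_pos (by omega)]
        · rw [if_neg (by omega), if_neg (by omega), if_neg (by omega)]
      rw [hupd] at hstep
      refine chain_trans (ih (by omega)) (chain_single hstep.1 ?_ ?_)
      · exact regionOf_good hr hcur
      · exact regionOf_good hr (hsmix (k + 1))
  have hfin := main (2 * r) le_rfl
  have heq : regionOf r (mixv m e (2 * r)) = regionOf r m :=
    regionOf_congr (fun i hi => by simp [mixv]; intro h; omega)
  rw [heq] at hfin
  exact hfin

lemma convex_lb {a b c l : ℝ} (h1 : c ≤ a) (h2 : c ≤ b) (h3 : 0 ≤ l) (h4 : l ≤ 1) :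
    c ≤ a + l * (b - a) := by
  nlinarith [mul_nonneg h3 (sub_nonneg.2 h2), mul_nonneg (sub_nonneg.2 h4) (sub_nonneg.2 h1)]

lemma convex_ub {a b c l : ℝ} (h1 : a ≤ c) (h2 : b ≤ c) (h3 : 0 ≤ l) (h4 : l ≤ 1) :
    a + l * (b - a) ≤ c := by
  nlinarith [mul_nonneg h3 (sub_nonneg.2 h2), mul_nonneg (sub_nonneg.2 h4) (sub_nonneg.2 h1)]

lemma move {ε : ℝ} (hε : 0 < ε) {r : ℕ} (hr : 1 ≤ r) {e e' : ℕ → ℝ}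
    (he : SortedIn (2 * r) e) (he' : SortedIn (2 * r) e') :
    Chain ε (regionOf r e) (regionOf r e') := by
  obtain ⟨γ₁, hγ₁, hG1⟩ := exists_gaps hr he
  obtain ⟨γ₂, hγ₂, hG2⟩ := exists_gaps hr he'
  set γ := min γ₁ γ₂ with hγdef
  have hγ : 0 < γ := lt_min hγ₁ hγ₂
  have hGe : GapsIn (2 * r) γ e := gapsIn_mono (min_le_left _ _) hG1
  have hGe' : GapsIn (2 * r) γ e' := gapsIn_mono (min_le_right _ _) hG2
  set β := min 1 ε * γ / 4 with hβdef
  have hm0 : 0 < min 1 ε := lt_min one_pos hε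
  have hβ0 : 0 < β := by positivity
  have hβ1 : β ≤ γ / 4 := by
    have : min 1 ε * γ ≤ 1 * γ := mul_le_mul_of_nonneg_right (min_le_left _ _) hγ.le
    rw [hβdef]; linarith
  have hβ2 : β < ε * (γ - β) := by
    have h1 : min 1 ε ≤ ε := min_le_right _ _
    have h2 : β ≤ ε * γ / 4 := by
      have : min 1 ε * γ ≤ ε * γ := mul_le_mul_of_nonneg_right h1 hγ.le
      rw [hβdef]; linarith
    have h3 : ε * (γ - β) ≥ ε * (3 * γ / 4) := mul_le_mul_of_nonneg_left (by linarith) hε.le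
    nlinarith [mul_pos hε hγ]
  have aux : ∀ N : ℕ, ∀ f : ℕ → ℝ, GapsIn (2 * r) γ f →
      (∀ j, j < 2 * r → |e' j - f j| ≤ N * β) → Chain ε (regionOf r f) (regionOf r e') := by
    intro N
    induction N with
    | zero =>
      intro f hGf hd
      have heq : regionOf r f = regionOf r e' := by
        apply regionOf_congr
        intro i hi
        have := hd i hi
        simp only [Nat.cast_zero, zero_mul] at this
        have := abs_nonpos_iff.1 this
        linarith
      rw [heq]
      exact chain_refl (regionOf_good hr he')
    | succ N ih =>
      intro f hGf hd
      have hrange : (Finset.range (2 * r)).Nonempty := ⟨0, by simp; omega⟩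
      set D := (Finset.range (2 * r)).sup' hrange (fun j => |e' j - f j|) with hDdef
      have hDle : ∀ j, j < 2 * r → |e' j - f j| ≤ D := by
        intro j hj
        exact Finset.le_sup' (fun j => |e' j - f j|) (Finset.mem_range.2 hj)
      have hD0 : 0 ≤ D := le_trans (abs_nonneg _) (hDle 0 (by omega))
      have hDub : D ≤ (N + 1) * β := by
        apply Finset.sup'_le
        intro j hj
        have := hd j (by simp at hj; omega)
        push_cast at this ⊢
        linarith
      by_cases hcase : D ≤ β
      · exact move_round hε hr hγ hβ0.le hβ1 hβ2 hGf hGe'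
          (fun j hj => le_trans (hDle j hj) hcase)
      · push_neg at hcase
        have hDpos : 0 < D := lt_trans hβ0 hcase
        set l := β / D with hldef
        have hl0 : 0 < l := div_pos hβ0 hDpos
        have hl1 : l < 1 := (div_lt_one hDpos).2 hcase
        set m := fun j => f j + l * (e' j - f j) with hmdef
        have hGm : GapsIn (2 * r) γ m := by
          refine ⟨?_, ?_, ?_⟩
          · exact convex_lb hGf.1 hGe'.1 hl0.le hl1.le
          · exact convex_ub hGf.2.1 hGe'.2.1 hl0.le hl1.le
          · intro i hi
            have key : m (i + 1) - m i =
                (f (i + 1) - f i) + l * ((e' (i + 1) - e' i) - (f (i + 1) - f i)) := by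
              simp only [hmdef]; ring
            rw [key]
            exact convex_lb (hGf.2.2 i hi) (hGe'.2.2 i hi) hl0.le hl1.le
        have hdm : ∀ j, j < 2 * r → |m j - f j| ≤ β := by
          intro j hj
          have : m j - f j = l * (e' j - f j) := by simp only [hmdef]; ring
          rw [this, abs_mul, abs_of_pos hl0]
          calc l * |e' j - f j| ≤ l * D := mul_le_mul_of_nonneg_left (hDle j hj) hl0.le
            _ = β := by rw [hldef]; field_simp
        have hdm' : ∀ j, j < 2 * r → |e' j - m j| ≤ N * β := by
          intro j hj
          have key : e' j - m j = (1 - l) * (e' j - f j) := by simp only [hmdef]; ring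
          rw [key, abs_mul, abs_of_pos (by linarith : (0:ℝ) < 1 - l)]
          have h5 : (1 - l) * |e' j - f j| ≤ (1 - l) * D :=
            mul_le_mul_of_nonneg_left (hDle j hj) (by linarith)
          have h6 : (1 - l) * D = D - β := by
            rw [hldef]; field_simp
          push_cast at hDub ⊢
          linarith
        exact chain_trans (move_round hε hr hγ hβ0.le hβ1 hβ2 hGf hGm hdm) (ih m hGm hdm')
  obtain ⟨N, hN⟩ := exists_nat_ge (1 / β)
  have hNβ : 1 ≤ N * β := by
    rw [div_le_iff₀ hβ0] at hN
    linarith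
  apply aux N e hGe
  intro j hj
  have h1 := he.1 j hj
  have h2 := he'.1 j hj
  rw [abs_le]
  constructor
  · simp only [Set.mem_Ioo] at h1 h2; linarith
  · simp only [Set.mem_Ioo] at h1 h2; linarith

/-! ### Dropping a component -/

lemma id_plhomeo {ε : ℝ} (hε : 0 < ε) : IsPLHomeoMuLt (fun x => x) ε := by
  refine ⟨⟨fun x hx => hx, fun a _ b _ h => h, fun y hy => ⟨y, hy, rfl⟩⟩,
    fun a _ b _ h => h, ⟨∅, ?_⟩⟩
  intro x _ _
  exact ⟨1, hasDerivAt_id x, by simpa using hε⟩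

noncomputable def canonv (ρ : ℕ) (η : ℝ) : ℕ → ℝ := fun i =>
  if i < 2 * ρ - 2 then (2 * (i:ℝ) + 1) / (16 * (ρ:ℝ))
  else if i = 2 * ρ - 2 then 1/4
  else if i = 2 * ρ - 1 then 1/2
  else if i = 2 * ρ then 1/2 + η
  else 1/2 + 2 * η

section canon

variable {ρ : ℕ} {η : ℝ} (hρ : 1 ≤ ρ) (hη : 0 < η) (hη2 : η ≤ 1/32)

lemma canonv_small {i : ℕ} (hi : i < 2 * ρ - 2) :
    canonv ρ η i = (2 * (i:ℝ) + 1) / (16 * (ρ:ℝ)) := if_pos hi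

include hρ in
lemma canonv_small_bounds {i : ℕ} (hi : i < 2 * ρ - 2) :
    0 < canonv ρ η i ∧ canonv ρ η i < 1/4 := by
  rw [canonv_small hi]
  have hρ' : (0:ℝ) < 16 * ρ := by positivity
  have hcast : (i:ℝ) + 3 ≤ 2 * (ρ:ℝ) := by exact_mod_cast (by omega : i + 3 ≤ 2 * ρ)
  constructor
  · positivity
  · rw [div_lt_iff₀ hρ']
    linarith

lemma canonv_a : canonv ρ η (2 * ρ - 2) = 1/4 := by
  rw [canonv, if_neg (by omega), if_pos rfl]

include hρ in
lemma canonv_b : canonv ρ η (2 * ρ - 1) = 1/2 := by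
  rw [canonv, if_neg (by omega), if_neg (by omega), if_pos rfl]

include hρ in
lemma canonv_c : canonv ρ η (2 * ρ) = 1/2 + η := by
  rw [canonv, if_neg (by omega), if_neg (by omega), if_neg (by omega), if_pos rfl]

include hρ in
lemma canonv_d : canonv ρ η (2 * ρ + 1) = 1/2 + 2 * η := by
  rw [canonv, if_neg (by omega), if_neg (by omega), if_neg (by omega), if_neg (by omega)]

include hρ hη hη2 in
lemma canon_sorted : SortedIn (2 * ρ + 2) (canonv ρ η) := by
  constructor
  · intro i hi
    rcases Nat.lt_or_ge i (2 * ρ - 2) with h | h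
    · have := canonv_small_bounds (η := η) hρ h
      constructor
      · exact this.1
      · linarith [this.2]
    · rcases Nat.lt_or_ge i (2 * ρ) with h2 | h2
      · rcases Nat.lt_or_ge i (2 * ρ - 1) with h3 | h3
        · have : i = 2 * ρ - 2 := by omega
          rw [this, canonv_a]
          norm_num
        · have : i = 2 * ρ - 1 := by omega
          rw [this, canonv_b hρ]
          norm_num
      · rcases Nat.lt_or_ge i (2 * ρ + 1) with h3 | h3
        · have : i = 2 * ρ := by omega
          rw [this, canonv_c hρ]
          constructor <;> [linarith; linarith]
        · have : i = 2 * ρ + 1 := by omega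
          rw [this, canonv_d hρ]
          constructor <;> [linarith; linarith]
  · intro i hi
    rcases Nat.lt_or_ge (i + 1) (2 * ρ - 2) with h | h
    · rw [canonv_small h, canonv_small (by omega)]
      have hρ' : (0:ℝ) < 16 * ρ := by positivity
      rw [div_lt_div_iff_of_pos_right hρ']
      push_cast
      linarith
    · rcases Nat.lt_or_ge i (2 * ρ - 2) with h2 | h2
      · have hi1 : i + 1 = 2 * ρ - 2 := by omega
        rw [hi1, canonv_a]
        exact (canonv_small_bounds (η := η) hρ h2).2
      · rcases Nat.lt_or_ge i (2 * ρ - 1) with h3 | h3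
        · have he1 : i = 2 * ρ - 2 := by omega
          have he2 : i + 1 = 2 * ρ - 1 := by omega
          rw [he2, he1, canonv_a, canonv_b hρ]
          norm_num
        · rcases Nat.lt_or_ge i (2 * ρ) with h4 | h4
          · have he1 : i = 2 * ρ - 1 := by omega
            have he2 : i + 1 = 2 * ρ := by omega
            rw [he2, he1, canonv_b hρ, canonv_c hρ]
            linarith
          · have he1 : i = 2 * ρ := by omega
            have he2 : i + 1 = 2 * ρ + 1 := by omega
            rw [he2, he1, canonv_c hρ, canonv_d hρ]
            linarith

end canon

lemma sortedIn_prefix {n m : ℕ} {e : ℕ → ℝ} (h : SortedIn n e) (hm : m ≤ n) :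
    SortedIn m e :=
  ⟨fun i hi => h.1 i (by omega), fun i hi => h.2 i (by omega)⟩

lemma drop {ε η : ℝ} (hε : 0 < ε) (hη : 0 < η) (hη2 : η ≤ 1/32) (hη3 : 2 * η < ε/4)
    {ρ : ℕ} (hρ : 1 ≤ ρ) :
    EpsEquiv ε (regionOf (ρ + 1) (canonv ρ η)) (regionOf ρ (canonv ρ η)) := by
  have huw : (1/4 : ℝ) < 1/2 + 2 * η := by linarith
  have hwv : (1/2 : ℝ) + 2 * η < 1 := by linarith
  have hut : (1/4 : ℝ) < 1/2 := by norm_num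
  have htv : (1/2 : ℝ) < 1 := by norm_num
  have habs : |(1/2 : ℝ) - (1/2 + 2 * η)| = 2 * η := by
    rw [abs_of_nonpos (by linarith)]; ring
  have hc1 : |(1/2 : ℝ) - (1/2 + 2 * η)| < ε * ((1/2 + 2 * η) - 1/4) := by
    rw [habs]; nlinarith
  have hc2 : |(1/2 : ℝ) - (1/2 + 2 * η)| < ε * (1 - (1/2 + 2 * η)) := by
    rw [habs]; nlinarith
  have hφ := bump_plhomeo (u := 1/4) (v := 1) (w := 1/2 + 2 * η) (t := 1/2)
    huw hwv hut htv (by norm_num) le_rfl hε hc1 hc2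
  refine ⟨bump (1/4) 1 (1/2 + 2 * η) (1/2), fun x => x, hφ, id_plhomeo hε, ?_, ?_⟩
  · unfold regionOf
    rw [Set.image_iUnion₂]
    apply Set.iUnion₂_subset
    intro j hj
    have hj' := Finset.mem_range.1 hj
    have hmono := (bump_strictMono huw hwv hut htv).monotone
    refine subset_trans (mono_image_Icc hmono _ _) ?_
    rcases Nat.lt_or_ge j (ρ - 1) with h | h
    · -- small components fixed
      have b1 := canonv_small_bounds (η := η) hρ (i := 2 * j) (by omega)
      have b2 := canonv_small_bounds (η := η) hρ (i := 2 * j + 1) (by omega)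
      rw [bump_of_le (by linarith [b1.2]), bump_of_le (by linarith [b2.2])]
      exact comp_subset_regionOf (by omega)
    · rcases Nat.lt_or_ge j ρ with h2 | h2
      · -- the interval [1/4, 1/2]
        have he1 : 2 * j = 2 * ρ - 2 := by omega
        have he2 : 2 * j + 1 = 2 * ρ - 1 := by omega
        rw [he2, he1, canonv_a, canonv_b hρ]
        have hfix : bump (1/4) 1 (1/2 + 2*η) (1/2) (1/4) = 1/4 := bump_of_le le_rfl
        have hmid := bump_mid1_bounds (u := (1/4:ℝ)) (v := 1) (w := 1/2 + 2*η) (t := 1/2)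
          huw hwv hut (x := 1/2) (by norm_num) (by linarith)
        rw [hfix]
        refine subset_trans (Set.Icc_subset_Icc (a₂ := (1/4:ℝ)) (b₂ := (1/2:ℝ)) le_rfl hmid.2) ?_
        have : Set.Icc (canonv ρ η (2 * (ρ-1))) (canonv ρ η (2 * (ρ-1) + 1)) ⊆
            regionOf ρ (canonv ρ η) := comp_subset_regionOf (by omega)
        have hi1 : 2 * (ρ - 1) = 2 * ρ - 2 := by omega
        have hi2 : 2 * (ρ - 1) + 1 = 2 * ρ - 1 := by omega
        rw [hi2, hi1, canonv_a, canonv_b hρ] at this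
        exact this
      · -- the tiny interval [1/2+η, 1/2+2η]
        have he1 : 2 * j = 2 * ρ := by omega
        have he2 : 2 * j + 1 = 2 * ρ + 1 := by omega
        rw [he2, he1, canonv_c hρ, canonv_d hρ]
        have hw : bump (1/4) 1 (1/2 + 2*η) (1/2) (1/2 + 2*η) = 1/2 := bump_w huw hwv hut
        have hmid := bump_mid1_bounds (u := (1/4:ℝ)) (v := 1) (w := 1/2 + 2*η) (t := 1/2)
          huw hwv hut (x := 1/2 + η) (by linarith) (by linarith)
        rw [hw]
        refine subset_trans (Set.Icc_subset_Icc (a₂ := (1/4:ℝ)) (b₂ := (1/2:ℝ)) (by linarith [hmid.1]) le_rfl) ?_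
        have : Set.Icc (canonv ρ η (2 * (ρ-1))) (canonv ρ η (2 * (ρ-1) + 1)) ⊆
            regionOf ρ (canonv ρ η) := comp_subset_regionOf (by omega)
        have hi1 : 2 * (ρ - 1) = 2 * ρ - 2 := by omega
        have hi2 : 2 * (ρ - 1) + 1 = 2 * ρ - 1 := by omega
        rw [hi2, hi1, canonv_a, canonv_b hρ] at this
        exact this
  · rw [Set.image_id']
    unfold regionOf
    apply Set.iUnion₂_subset
    intro j hj
    exact comp_subset_regionOf (by simp at hj; omega)

/-! ### Reduction to the base interval -/

noncomputable def basev : ℕ → ℝ := fun i => if i = 0 then 1/4 else 1/2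

lemma base_sorted : SortedIn 2 basev := by
  constructor
  · intro i hi
    by_cases h : i = 0 <;> simp [basev, h] <;> norm_num
  · intro i hi
    have : i = 0 := by omega
    simp [basev, this]
    norm_num

lemma reduce {ε : ℝ} (hε : 0 < ε) :
    ∀ r, 1 ≤ r → ∀ e : ℕ → ℝ, SortedIn (2 * r) e →
      Chain ε (regionOf r e) (regionOf 1 basev) := by
  intro r
  induction r with
  | zero => omega
  | succ ρ ih =>
    intro _ e he
    by_cases hρ0 : ρ = 0
    · subst hρ0
      exact move hε le_rfl he base_sorted
    · have hρ : 1 ≤ ρ := by omega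
      set η := min ε 1 / 32 with hηdef
      have hη : 0 < η := by rw [hηdef]; positivity
      have hη2 : η ≤ 1/32 := by
        rw [hηdef]
        have : min ε 1 ≤ 1 := min_le_right _ _
        linarith
      have hη3 : 2 * η < ε / 4 := by
        rw [hηdef]
        have : min ε 1 ≤ ε := min_le_left _ _
        linarith
      have hcs : SortedIn (2 * ρ + 2) (canonv ρ η) := canon_sorted hρ hη hη2
      have hcs2 : SortedIn (2 * (ρ + 1)) (canonv ρ η) := by
        have : 2 * (ρ + 1) = 2 * ρ + 2 := by omega
        rw [this]; exact hcs
      have hcs' : SortedIn (2 * ρ) (canonv ρ η) := sortedIn_prefix hcs (by omega)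
      refine chain_trans (move hε (by omega) he hcs2) ?_
      refine chain_trans (chain_single (drop hε hη hη2 hη3 hρ) ?_ ?_) (ih hρ _ hcs')
      · exact regionOf_good (by omega) hcs2
      · exact regionOf_good hρ hcs'

/-! ### Extracting a sorted endpoint vector from a region -/

def evec (Q : ℕ → ℝ × ℝ) : ℕ → ℝ := fun i =>
  if i % 2 = 0 then (Q (i / 2)).1 else (Q (i / 2)).2

lemma evec_even (Q : ℕ → ℝ × ℝ) (k : ℕ) : evec Q (2 * k) = (Q k).1 := by
  unfold evec
  rw [if_pos (by omega)]
  congr 2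
  omega

lemma evec_odd (Q : ℕ → ℝ × ℝ) (k : ℕ) : evec Q (2 * k + 1) = (Q k).2 := by
  unfold evec
  rw [if_neg (by omega)]
  congr 2
  omega

lemma exists_vec {K : Set ℝ} (hK : IsRegion K) (hsub : K ⊆ Set.Ioo (0:ℝ) 1) :
    ∃ r : ℕ, 1 ≤ r ∧ ∃ e : ℕ → ℝ, SortedIn (2 * r) e ∧ regionOf r e = K := by
  obtain ⟨S, hS0, hS1, hS2, hS3⟩ := hK
  have hinj : Set.InjOn Prod.fst (S : Set (ℝ × ℝ)) := by
    intro p hp q hq hpq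
    by_contra hne
    have hd := hS2 p hp q hq hne
    have hmem : p.1 ∈ Set.Icc p.1 p.2 := ⟨le_rfl, (hS1 p hp).le⟩
    have hmem2 : p.1 ∈ Set.Icc q.1 q.2 := by
      rw [hpq]
      exact ⟨le_rfl, (hS1 q hq).le⟩
    exact Set.disjoint_left.1 hd hmem hmem2
  set r := S.card with hrdef
  have hr : 1 ≤ r := Finset.card_pos.2 hS0
  set F := S.image Prod.fst with hFdef
  have hcard : F.card = r := Finset.card_image_of_injOn hinj
  set iso := F.orderIsoOfFin hcard with hisodef
  have hchoice : ∀ k : Fin r, ∃ p, p ∈ S ∧ p.1 = (iso k : ℝ) := by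
    intro k
    have hmem : ((iso k : F) : ℝ) ∈ F := (iso k).2
    obtain ⟨p, hp, he⟩ := Finset.mem_image.1 hmem
    exact ⟨p, hp, he⟩
  choose P hPmem hPfst using hchoice
  have hPlt : ∀ k : Fin r, (P k).1 < (P k).2 := fun k => hS1 _ (hPmem k)
  have hPc : ∀ k, Set.Icc (P k).1 (P k).2 ⊆ K := by
    intro k
    rw [hS3]
    intro x hx
    exact Set.mem_biUnion (hPmem k) hx
  have hfstlt : ∀ k l : Fin r, k < l → (P k).1 < (P l).1 := by
    intro k l hkl
    rw [hPfst k, hPfst l]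
    exact_mod_cast iso.strictMono hkl
  have hsep : ∀ k l : Fin r, k < l → (P k).2 < (P l).1 := by
    intro k l hkl
    by_contra hcon
    push_neg at hcon
    have hne : P k ≠ P l := by
      intro hh
      have := hfstlt k l hkl
      rw [hh] at this
      exact lt_irrefl _ this
    have hd := hS2 _ (hPmem k) _ (hPmem l) hne
    have h1 : (P l).1 ∈ Set.Icc (P k).1 (P k).2 := ⟨(hfstlt k l hkl).le, hcon⟩
    have h2 : (P l).1 ∈ Set.Icc (P l).1 (P l).2 := ⟨le_rfl, (hPlt l).le⟩
    exact Set.disjoint_left.1 hd h1 h2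
  classical
  set Q : ℕ → ℝ × ℝ := fun j => if h : j < r then P ⟨j, h⟩ else (0, 0) with hQdef
  have hQ : ∀ k : Fin r, Q k.1 = P k := by
    intro k
    rw [hQdef]
    exact dif_pos k.2
  set e : ℕ → ℝ := evec Q with hedef
  have he_even : ∀ k : Fin r, e (2 * k.1) = (P k).1 := by
    intro k
    rw [hedef, evec_even, hQ k]
  have he_odd : ∀ k : Fin r, e (2 * k.1 + 1) = (P k).2 := by
    intro k
    rw [hedef, evec_odd, hQ k]
  have hmemK : ∀ i, i < 2 * r → e i ∈ K := by
    intro i hi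
    set k : Fin r := ⟨i / 2, by omega⟩ with hkdef
    rcases Nat.even_or_odd i with ⟨m, hm⟩ | ⟨m, hm⟩
    · have hik : i = 2 * k.1 := by simp only [hkdef]; omega
      rw [hik, he_even]
      exact hPc k ⟨le_rfl, (hPlt k).le⟩
    · have hik : i = 2 * k.1 + 1 := by simp only [hkdef]; omega
      rw [hik, he_odd]
      exact hPc k ⟨(hPlt k).le, le_rfl⟩
  refine ⟨r, hr, e, ⟨fun i hi => hsub (hmemK i hi), ?_⟩, ?_⟩
  · intro i hi
    rcases Nat.even_or_odd i with ⟨m, hm⟩ | ⟨m, hm⟩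
    · set k : Fin r := ⟨m, by omega⟩ with hkdef
      have h1 : i = 2 * k.1 := by simp only [hkdef]; omega
      have h2 : i + 1 = 2 * k.1 + 1 := by simp only [hkdef]; omega
      rw [h2, h1, he_even, he_odd]
      exact hPlt k
    · set k : Fin r := ⟨m, by omega⟩ with hkdef
      set k' : Fin r := ⟨m + 1, by omega⟩ with hk'def
      have h1 : i = 2 * k.1 + 1 := by simp only [hkdef]; omega
      have h2 : i + 1 = 2 * k'.1 := by simp only [hk'def]; omega
      rw [h2, h1, he_odd, he_even]
      exact hsep k k' (by simp only [hkdef, hk'def, Fin.mk_lt_mk]; omega)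
  · rw [hS3]
    apply Set.Subset.antisymm
    · unfold regionOf
      apply Set.iUnion₂_subset
      intro j hj
      have hj' := Finset.mem_range.1 hj
      set k : Fin r := ⟨j, hj'⟩ with hkdef
      have h1 : 2 * j = 2 * k.1 := by simp only [hkdef]
      have h2 : 2 * j + 1 = 2 * k.1 + 1 := by simp only [hkdef]
      rw [h1, h2, he_even, he_odd]
      intro x hx
      exact Set.mem_biUnion (hPmem k) hx
    · intro x hx
      rw [Set.mem_iUnion₂] at hx
      obtain ⟨p, hp, hxp⟩ := hx
      have hp' : p ∈ S := hp
      have hpf : p.1 ∈ F := by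
        rw [hFdef, Finset.mem_image]
        exact ⟨p, hp', rfl⟩
      set k : Fin r := iso.symm ⟨p.1, hpf⟩ with hkdef
      have hPk : P k = p := by
        apply hinj (hPmem k) hp'
        rw [hPfst k, hkdef]
        have := iso.apply_symm_apply ⟨p.1, hpf⟩
        rw [this]
      unfold regionOf
      rw [Set.mem_iUnion₂]
      refine ⟨k.1, Finset.mem_range.2 k.2, ?_⟩
      have h1 : e (2 * k.1) = (P k).1 := he_even k
      have h2 : e (2 * k.1 + 1) = (P k).2 := he_odd k
      rw [h1, h2, hPk]
      exact hxp

theorem exists_eps_equivalent_sequence (K L : Set ℝ)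
    (hK : IsRegion K) (hL : IsRegion L)
    (hKsub : K ⊆ Set.Ioo (0:ℝ) 1) (hLsub : L ⊆ Set.Ioo (0:ℝ) 1)
    (ε : ℝ) (hε : 0 < ε) :
    ∃ i₀ : ℕ, ∃ M : ℕ → Set ℝ, M 0 = K ∧ M i₀ = L ∧
      (∀ i ≤ i₀, IsRegion (M i) ∧ M i ⊆ Set.Ioo (0:ℝ) 1) ∧
      (∀ i < i₀, EpsEquiv ε (M i) (M (i + 1))) := by
  obtain ⟨r1, hr1, e1, hs1, heq1⟩ := exists_vec hK hKsub
  obtain ⟨r2, hr2, e2, hs2, heq2⟩ := exists_vec hL hLsub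
  have c1 : Chain ε K (regionOf 1 basev) := by
    rw [← heq1]
    exact reduce hε r1 hr1 e1 hs1
  have c2 : Chain ε L (regionOf 1 basev) := by
    rw [← heq2]
    exact reduce hε r2 hr2 e2 hs2
  exact chain_trans c1 (chain_symm c2)
end

section
/- Let K be a region in (0,1) consisting of a single closed interval and L a region consisting of a single closed interval with K ⊆ L, and let ε > 0. Then there exists an ε-equivalent sequence M₀ = K, …, M_{i₀} = L between K and L with the additional monotonicity property M_i ⊆ M_{i+1} for all i = 0, …, i₀ − 1. -/
/-- A 3-piece increasing PL map written as a min/max of affine maps. -/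
noncomputable def plMap (s1 s2 s3 p q u v : ℝ) (x : ℝ) : ℝ :=
  min (s1 * x) (max (u + s2 * (x - p)) (v + s3 * (x - q)))

lemma isRegion_Icc {x y : ℝ} (h : x < y) : IsRegion (Set.Icc x y) :=
  ⟨{(x, y)}, by simp, by simp [h], by simp, by simp⟩

lemma id_pl {ε : ℝ} (hε : 0 < ε) : IsPLHomeoMuLt id ε :=
  ⟨Set.bijOn_id _, fun x _ y _ h => h,
    ∅, fun x _ _ => ⟨1, hasDerivAt_id x, by simpa using hε⟩⟩

lemma pl_good (s1 s2 s3 p q u v ε : ℝ)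
    (hp : 0 < p) (hpq : p < q) (hq1 : q < 1)
    (e1 : s1 * p = u) (e2 : u + s2 * (q - p) = v) (e3 : v + s3 * (1 - q) = 1)
    (hs1 : 1 ≤ s1) (hs2p : 0 < s2) (hs2 : s2 ≤ 1) (hs3 : 1 ≤ s3)
    (b1 : s1 < 1 + ε) (b2 : 1 - ε < s2) (b3 : s3 < 1 + ε) (hε : 0 < ε) :
    IsPLHomeoMuLt (plMap s1 s2 s3 p q u v) ε ∧
      plMap s1 s2 s3 p q u v '' Set.Icc p q ⊆ Set.Icc u v := by
  have hs1p : 0 < s1 := lt_of_lt_of_le one_pos hs1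
  have hs3p : 0 < s3 := lt_of_lt_of_le one_pos hs3
  have hA : ∀ x, x ≤ p → s1 * x ≤ u + s2 * (x - p) := by
    intro x hx
    nlinarith [mul_nonneg (by linarith : (0:ℝ) ≤ s1 - s2) (by linarith : (0:ℝ) ≤ p - x)]
  have hB : ∀ x, p ≤ x → u + s2 * (x - p) ≤ s1 * x := by
    intro x hx
    nlinarith [mul_nonneg (by linarith : (0:ℝ) ≤ s1 - s2) (by linarith : (0:ℝ) ≤ x - p)]
  have hC : ∀ x, x ≤ q → v + s3 * (x - q) ≤ u + s2 * (x - p) := by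
    intro x hx
    nlinarith [mul_nonneg (by linarith : (0:ℝ) ≤ s3 - s2) (by linarith : (0:ℝ) ≤ q - x)]
  have hD : ∀ x, q ≤ x → u + s2 * (x - p) ≤ v + s3 * (x - q) := by
    intro x hx
    nlinarith [mul_nonneg (by linarith : (0:ℝ) ≤ s3 - s2) (by linarith : (0:ℝ) ≤ x - q)]
  have hgq : v ≤ s1 * q := by nlinarith [hB q hpq.le]
  have hE : ∀ x, q ≤ x → x ≤ 1 → v + s3 * (x - q) ≤ s1 * x := by
    intro x hx hx1
    nlinarith [mul_nonneg (by linarith : (0:ℝ) ≤ 1 - x) (by linarith : (0:ℝ) ≤ s1 * q - v),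
      mul_nonneg (by linarith : (0:ℝ) ≤ x - q) (by linarith : (0:ℝ) ≤ s1 - 1)]
  have hf1 : ∀ x, x ≤ p → plMap s1 s2 s3 p q u v x = s1 * x := by
    intro x hx
    exact min_eq_left ((hA x hx).trans (le_max_left _ _))
  have hf2 : ∀ x, p ≤ x → x ≤ q → plMap s1 s2 s3 p q u v x = u + s2 * (x - p) := by
    intro x hx hx'
    unfold plMap
    rw [max_eq_left (hC x hx'), min_eq_right (hB x hx)]
  have hf3 : ∀ x, q ≤ x → x ≤ 1 → plMap s1 s2 s3 p q u v x = v + s3 * (x - q) := by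
    intro x hx hx'
    unfold plMap
    rw [max_eq_right (hD x hx), min_eq_right (hE x hx hx')]
  have hf0 : plMap s1 s2 s3 p q u v 0 = 0 := by rw [hf1 0 hp.le, mul_zero]
  have hfone : plMap s1 s2 s3 p q u v 1 = 1 := by rw [hf3 1 hq1.le le_rfl]; linarith
  have hmono : StrictMono (plMap s1 s2 s3 p q u v) := by
    intro x y hxy
    have l1 : s1 * x < s1 * y := by nlinarith
    have l2 : u + s2 * (x - p) < u + s2 * (y - p) := by nlinarith
    have l3 : v + s3 * (x - q) < v + s3 * (y - q) := by nlinarith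
    exact lt_min ((min_le_left _ _).trans_lt l1)
      ((min_le_right _ _).trans_lt
        (max_lt (l2.trans_le (le_max_left _ _)) (l3.trans_le (le_max_right _ _))))
  have hcont : Continuous (plMap s1 s2 s3 p q u v) := by
    unfold plMap; fun_prop
  constructor
  · refine ⟨⟨?_, hmono.injective.injOn, ?_⟩, hmono.strictMonoOn _, ?_⟩
    · intro x hx
      constructor
      · rw [← hf0]; exact hmono.monotone hx.1
      · rw [← hfone]; exact hmono.monotone hx.2
    · have := intermediate_value_Icc (zero_le_one (α := ℝ)) hcont.continuousOn
      rw [hf0, hfone] at this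
      exact this
    · refine ⟨{0, p, q, 1}, fun x hx hxs => ?_⟩
      simp only [Finset.coe_insert, Set.mem_insert_iff, Finset.coe_singleton,
        Set.mem_singleton_iff, not_or] at hxs
      obtain ⟨hx0, hxp, hxq, hx1⟩ := hxs
      have hx0' : 0 < x := lt_of_le_of_ne hx.1 (Ne.symm hx0)
      have hx1' : x < 1 := lt_of_le_of_ne hx.2 hx1
      rcases lt_trichotomy x p with h | h | h
      · refine ⟨s1, ?_, by rw [abs_lt]; constructor <;> linarith⟩
        have hd : HasDerivAt (fun y : ℝ => s1 * y) s1 x := by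
          simpa using (hasDerivAt_id x).const_mul s1
        apply hd.congr_of_eventuallyEq
        filter_upwards [Iio_mem_nhds h] with y hy
        exact hf1 y (le_of_lt hy)
      · exact absurd h hxp
      · rcases lt_trichotomy x q with h' | h' | h'
        · refine ⟨s2, ?_, by rw [abs_lt]; constructor <;> linarith⟩
          have hd : HasDerivAt (fun y : ℝ => u + s2 * (y - p)) s2 x := by
            simpa using (((hasDerivAt_id x).sub_const p).const_mul s2).const_add u
          apply hd.congr_of_eventuallyEq
          filter_upwards [Ioo_mem_nhds h h'] with y hy
          exact hf2 y hy.1.le hy.2.le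
        · exact absurd h' hxq
        · refine ⟨s3, ?_, by rw [abs_lt]; constructor <;> linarith⟩
          have hd : HasDerivAt (fun y : ℝ => v + s3 * (y - q)) s3 x := by
            simpa using (((hasDerivAt_id x).sub_const q).const_mul s3).const_add v
          apply hd.congr_of_eventuallyEq
          filter_upwards [Ioo_mem_nhds h' hx1'] with y hy
          exact hf3 y hy.1.le hy.2.le
  · rintro y ⟨x, hx, rfl⟩
    rw [hf2 x hx.1 hx.2]
    constructor
    · nlinarith [hx.1]
    · nlinarith [hx.2]

theorem exists_monotone_eps_equivalent_sequence (a b c d : ℝ)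
    (hab : a < b) (hcd : c < d)
    (hKL : Set.Icc a b ⊆ Set.Icc c d)
    (hsub : Set.Icc c d ⊆ Set.Ioo (0:ℝ) 1)
    (ε : ℝ) (hε : 0 < ε) :
    ∃ i₀ : ℕ, ∃ M : ℕ → Set ℝ, M 0 = Set.Icc a b ∧ M i₀ = Set.Icc c d ∧
      (∀ i ≤ i₀, IsRegion (M i) ∧ M i ⊆ Set.Ioo (0:ℝ) 1) ∧
      (∀ i < i₀, EpsEquiv ε (M i) (M (i + 1)) ∧ M i ⊆ M (i + 1)) := by
  have hca : c ≤ a := (hKL (Set.left_mem_Icc.mpr hab.le)).1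
  have hbd : b ≤ d := (hKL (Set.right_mem_Icc.mpr hab.le)).2
  have hc0 : 0 < c := (hsub (Set.left_mem_Icc.mpr hcd.le)).1
  have hd1 : d < 1 := (hsub (Set.right_mem_Icc.mpr hcd.le)).2
  obtain ⟨m, hm⟩ : ∃ m : ℝ, m = min c (min (1 - d) (b - a)) := ⟨_, rfl⟩
  have hm0 : 0 < m := hm ▸ lt_min hc0 (lt_min (by linarith) (by linarith))
  have hmc : m ≤ c := hm ▸ min_le_left _ _
  have hmd : m ≤ 1 - d := hm ▸ (min_le_right _ _).trans (min_le_left _ _)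
  have hmba : m ≤ b - a := hm ▸ (min_le_right _ _).trans (min_le_right _ _)
  obtain ⟨n, hn⟩ := exists_nat_gt (((a - c) + (d - b)) / (ε * m))
  have hn0 : 0 < n := by
    by_contra h
    push_neg at h
    interval_cases n
    have : 0 ≤ ((a - c) + (d - b)) / (ε * m) :=
      div_nonneg (by linarith) (by positivity)
    simp at hn
    linarith
  have hnR : (0:ℝ) < n := Nat.cast_pos.mpr hn0
  have hkey : (a - c) + (d - b) < n * (ε * m) := by
    rw [div_lt_iff₀ (by positivity)] at hn
    linarith
  obtain ⟨A, hAdef⟩ : ∃ A : ℕ → ℝ, A = fun i => a + ((min i n : ℕ) : ℝ) / n * (c - a) := ⟨_, rfl⟩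
  obtain ⟨B, hBdef⟩ : ∃ B : ℕ → ℝ, B = fun i => b + ((min i n : ℕ) : ℝ) / n * (d - b) := ⟨_, rfl⟩
  have ht : ∀ i, 0 ≤ ((min i n : ℕ) : ℝ) / n ∧ ((min i n : ℕ) : ℝ) / n ≤ 1 := by
    intro i
    constructor
    · positivity
    · rw [div_le_one hnR]
      exact_mod_cast min_le_right i n
  have hAc : ∀ i, c ≤ A i := by
    intro i
    obtain ⟨h1, h2⟩ := ht i
    simp only [hAdef]
    nlinarith [mul_nonneg (by linarith : (0:ℝ) ≤ 1 - ((min i n : ℕ) : ℝ) / n) (by linarith : (0:ℝ) ≤ a - c)]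
  have hAa : ∀ i, A i ≤ a := by
    intro i
    obtain ⟨h1, h2⟩ := ht i
    simp only [hAdef]
    nlinarith [mul_nonneg h1 (by linarith : (0:ℝ) ≤ a - c)]
  have hBb : ∀ i, b ≤ B i := by
    intro i
    obtain ⟨h1, h2⟩ := ht i
    simp only [hBdef]
    nlinarith [mul_nonneg h1 (by linarith : (0:ℝ) ≤ d - b)]
  have hBd : ∀ i, B i ≤ d := by
    intro i
    obtain ⟨h1, h2⟩ := ht i
    simp only [hBdef]
    nlinarith [mul_nonneg (by linarith : (0:ℝ) ≤ 1 - ((min i n : ℕ) : ℝ) / n) (by linarith : (0:ℝ) ≤ d - b)]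
  have hstepA : ∀ i, i < n → A i - A (i + 1) = (a - c) / n := by
    intro i hi
    simp only [hAdef, min_eq_left hi.le, min_eq_left (Nat.succ_le_of_lt hi)]
    push_cast
    field_simp
    ring
  have hstepB : ∀ i, i < n → B (i + 1) - B i = (d - b) / n := by
    intro i hi
    simp only [hBdef, min_eq_left hi.le, min_eq_left (Nat.succ_le_of_lt hi)]
    push_cast
    field_simp
    ring
  refine ⟨n, fun i => Set.Icc (A i) (B i), ?_, ?_, ?_, ?_⟩
  · have hA0 : A 0 = a := by simp [hAdef]
    have hB0 : B 0 = b := by simp [hBdef]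
    show Set.Icc (A 0) (B 0) = Set.Icc a b
    rw [hA0, hB0]
  · have hAn : A n = c := by
      simp only [hAdef, min_self]
      rw [div_self hnR.ne']
      ring
    have hBn : B n = d := by
      simp only [hBdef, min_self]
      rw [div_self hnR.ne']
      ring
    show Set.Icc (A n) (B n) = Set.Icc c d
    rw [hAn, hBn]
  · intro i _
    have h1 : A i < B i := lt_of_le_of_lt (hAa i) (lt_of_lt_of_le hab (hBb i))
    refine ⟨isRegion_Icc h1, fun x hx => hsub ⟨le_trans (hAc i) hx.1, le_trans hx.2 (hBd i)⟩⟩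
  · intro i hi
    have hsA := hstepA i hi
    have hsB := hstepB i hi
    have hstepnnA : (0:ℝ) ≤ (a - c) / n := div_nonneg (by linarith) hnR.le
    have hstepnnB : (0:ℝ) ≤ (d - b) / n := div_nonneg (by linarith) hnR.le
    have hAmono : A (i + 1) ≤ A i := by linarith
    have hBmono : B i ≤ B (i + 1) := by linarith
    obtain ⟨p, hpdef⟩ : ∃ p, p = A (i + 1) := ⟨_, rfl⟩
    obtain ⟨q, hqdef⟩ : ∃ q, q = B (i + 1) := ⟨_, rfl⟩
    obtain ⟨u, hudef⟩ : ∃ u, u = A i := ⟨_, rfl⟩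
    obtain ⟨v, hvdef⟩ : ∃ v, v = B i := ⟨_, rfl⟩
    rw [← hpdef, ← hudef] at hsA
    rw [← hqdef, ← hvdef] at hsB
    rw [← hpdef, ← hudef] at hAmono
    rw [← hqdef, ← hvdef] at hBmono
    have hpc : c ≤ p := hpdef ▸ hAc _
    have hqd : q ≤ d := hqdef ▸ hBd _
    have hua : u ≤ a := hudef ▸ hAa _
    have hvb : b ≤ v := hvdef ▸ hBb _
    have hp : 0 < p := lt_of_lt_of_le hc0 hpc
    have huv : u < v := lt_of_le_of_lt hua (lt_of_lt_of_le hab hvb)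
    have hpq : p < q := by linarith
    have hq1 : q < 1 := lt_of_le_of_lt hqd hd1
    have hqp : (0:ℝ) < q - p := by linarith
    have h1q : (0:ℝ) < 1 - q := by linarith
    -- strict slope bounds
    have hεm : (a - c) / n < ε * m ∧ (d - b) / n < ε * m ∧
        ((a - c) + (d - b)) / n < ε * m := by
      refine ⟨?_, ?_, ?_⟩ <;> · rw [div_lt_iff₀ hnR]; linarith
    obtain ⟨hba1, hba2, hba3⟩ := hεm
    have hsum : (a - c) / (n:ℝ) + (d - b) / (n:ℝ) = ((a - c) + (d - b)) / (n:ℝ) := by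
      ring
    have b1 : u / p < 1 + ε := by
      rw [div_lt_iff₀ hp]
      have h1 : ε * m ≤ ε * p :=
        mul_le_mul_of_nonneg_left (hmc.trans hpc) hε.le
      linarith [hsA, hba1, h1]
    have b2 : 1 - ε < (v - u) / (q - p) := by
      rw [lt_div_iff₀ hqp]
      have h1 : ε * m ≤ ε * (q - p) :=
        mul_le_mul_of_nonneg_left (by linarith : m ≤ q - p) hε.le
      linarith [hsA, hsB, hsum, hba3, h1]
    have b3 : (1 - v) / (1 - q) < 1 + ε := by
      rw [div_lt_iff₀ h1q]
      have h1 : ε * m ≤ ε * (1 - q) :=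
        mul_le_mul_of_nonneg_left (by linarith : m ≤ 1 - q) hε.le
      linarith [hsB, hba2, h1]
    have hgood := pl_good (u / p) ((v - u) / (q - p)) ((1 - v) / (1 - q)) p q u v ε
      hp hpq hq1
      (div_mul_cancel₀ u hp.ne')
      (by field_simp; ring)
      (by field_simp; ring)
      ((one_le_div hp).mpr (by linarith))
      (div_pos (by linarith) hqp)
      ((div_le_one hqp).mpr (by linarith))
      ((one_le_div h1q).mpr (by linarith))
      b1 b2 b3 hε
    rw [hpdef] at hp
    constructor
    · refine ⟨id, _, id_pl hε, hgood.1, ?_, ?_⟩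
      · rw [Set.image_id]
        show Set.Icc (A i) (B i) ⊆ Set.Icc (A (i+1)) (B (i+1))
        rw [← hpdef, ← hqdef, ← hudef, ← hvdef]
        exact Set.Icc_subset_Icc hAmono hBmono
      · show plMap _ _ _ _ _ _ _ '' Set.Icc (A (i+1)) (B (i+1)) ⊆ Set.Icc (A i) (B i)
        rw [← hpdef, ← hqdef, ← hudef, ← hvdef]
        exact hgood.2
    · show Set.Icc (A i) (B i) ⊆ Set.Icc (A (i+1)) (B (i+1))
      rw [← hpdef, ← hqdef, ← hudef, ← hvdef]
      exact Set.Icc_subset_Icc hAmono hBmono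
end
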